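/- arXiv:1410.5750 — 5 statements merged into one kernel-verified Lean document; each statement's English description precedes it below -/
import Mathlib

section
/- Let r ≥ 2 be even and let G be the blow-up of K_{r+2} minus a perfect matching by cliques of size h (as above). Then every copy of K_{r+1} in G contains at least r/2 edges lying inside a single blow-up clique, and consequently the number of pairwise edge-disjoint copies of K_{r+1} in G is at most (r+2)·binom(h,2)/(r/2), which is strictly less than e(G)/binom(r+1,2); hence G has no K_{r+1}-decomposition. -/
open SimpleGraph

namespace Paper

variable {V W : Type*}

/-- The copy of `F` inside a graph on vertex set `V` given by an injective map `φ`. -/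
def copyAt (F : SimpleGraph W) (φ : W ↪ V) : SimpleGraph V where
  Adj x y := ∃ a b, F.Adj a b ∧ φ a = x ∧ φ b = y
  symm := ⟨by rintro x y ⟨a, b, h, rfl, rfl⟩; exact ⟨b, a, h.symm, rfl, rfl⟩⟩
  loopless := ⟨by
    rintro x ⟨a, b, h, rfl, hb⟩
    exact F.loopless.irrefl a ((φ.injective hb) ▸ h)⟩

/-- `s` is an `F`-decomposition of `G`: a family of copies of `F` in `G`, pairwise
edge-disjoint, whose edge sets cover every edge of `G`. -/
def IsDecompositionOn (F : SimpleGraph W) (G : SimpleGraph V) (s : Set (W ↪ V)) : Prop :=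
  (∀ φ ∈ s, copyAt F φ ≤ G) ∧
  (∀ e ∈ G.edgeSet, ∃ φ ∈ s, e ∈ (copyAt F φ).edgeSet) ∧
  s.Pairwise fun φ ψ => Disjoint (copyAt F φ).edgeSet (copyAt F ψ).edgeSet

/-- `G` has an `F`-decomposition: its edge set can be partitioned into copies of `F`. -/
def HasDecomposition (F : SimpleGraph W) (G : SimpleGraph V) : Prop :=
  ∃ s : Set (W ↪ V), IsDecompositionOn F G s

/-- The number of edges of a graph. -/
noncomputable def ecard (G : SimpleGraph V) : ℕ := Nat.card G.edgeSet

/-- The degree of a vertex. -/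
noncomputable def ndeg (G : SimpleGraph V) (v : V) : ℕ := Nat.card (G.neighborSet v)

/-- The blow-up of `K_{r+2}` minus the perfect matching `{2k, 2k+1}` by cliques of
size `h`: vertices `(i, a)`, with `(i, a) ∼ (j, b)` iff they are distinct and either
`i = j` (edges inside a blow-up clique) or `i, j` are not matched in `M`. -/
def matchingBlowup (r h : ℕ) : SimpleGraph (Fin (r + 2) × Fin h) where
  Adj x y := x ≠ y ∧ (x.1 = y.1 ∨ (x.1 : ℕ) / 2 ≠ (y.1 : ℕ) / 2)
  symm := ⟨by
    rintro x y ⟨hne, hc⟩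
    refine ⟨hne.symm, ?_⟩
    rcases hc with h1 | h1
    · exact Or.inl h1.symm
    · exact Or.inr fun hh => h1 hh.symm⟩
  loopless := ⟨by rintro x ⟨hne, -⟩; exact hne rfl⟩

/-- An edge of the blow-up is internal if it lies inside one of the blow-up cliques. -/
def InternalEdge (r h : ℕ) (e : Sym2 (Fin (r + 2) × Fin h)) : Prop :=
  ∃ x y : Fin (r + 2) × Fin h, e = s(x, y) ∧ x.1 = y.1

lemma part1 {r h : ℕ} (hre : Even r) (φ : Fin (r+1) ↪ Fin (r+2) × Fin h)
    (hφ : copyAt (⊤ : SimpleGraph (Fin (r+1))) φ ≤ matchingBlowup r h) :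
    r / 2 ≤ {e | e ∈ (copyAt (⊤ : SimpleGraph (Fin (r+1))) φ).edgeSet
      ∧ InternalEdge r h e}.ncard := by
  classical
  set g : Fin (r+1) → ℕ := fun a => ((φ a).1 : ℕ) / 2 with hg
  have hadj : ∀ a b : Fin (r+1), a ≠ b → (matchingBlowup r h).Adj (φ a) (φ b) := by
    intro a b hab
    exact hφ ⟨a, b, hab, rfl, rfl⟩
  have hsame : ∀ a b : Fin (r+1), a ≠ b → g a = g b → (φ a).1 = (φ b).1 := by
    intro a b hab hgab
    rcases (hadj a b hab).2 with h1 | h1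
    · exact h1
    · exact absurd hgab h1
  have hne : ∀ a : Fin (r+1), (Finset.univ.filter (fun b => g b = g a)).Nonempty :=
    fun a => ⟨a, by simp⟩
  set m : Fin (r+1) → Fin (r+1) :=
    fun a => (Finset.univ.filter (fun b => g b = g a)).min' (hne a) with hm
  have hmin : ∀ a, m a ∈ Finset.univ.filter (fun b => g b = g a) :=
    fun a => Finset.min'_mem _ (hne a)
  have hmg : ∀ a, g (m a) = g a := fun a => (Finset.mem_filter.mp (hmin a)).2
  have hmeq : ∀ a b, g a = g b → m a = m b := by
    intro a b hab
    simp only [hm]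
    congr 1
    ext c
    simp [hab]
  set Sfin := Finset.univ.filter (fun a : Fin (r+1) => ¬ a = m a) with hS
  set Mfin := Finset.univ.filter (fun a : Fin (r+1) => a = m a) with hM
  have hsplit : Mfin.card + Sfin.card = r + 1 := by
    rw [hM, hS, Finset.card_filter_add_card_filter_not]
    simp
  have hr2 : r % 2 = 0 := Nat.even_iff.mp hre
  have hMcard : Mfin.card ≤ r / 2 + 1 := by
    have hc : Mfin.card ≤ (Finset.range (r/2+1)).card := by
      apply Finset.card_le_card_of_injOn g
      · intro a ha
        simp only [Finset.mem_coe, Finset.mem_range]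
        have := (φ a).1.isLt
        simp only [hg]
        omega
      · intro a ha b hb hgab
        have ha' := (Finset.mem_filter.mp ha).2
        have hb' := (Finset.mem_filter.mp hb).2
        rw [ha', hb', hmeq a b hgab]
    simpa using hc
  have hScard : r / 2 ≤ Sfin.card := by omega
  set J := Sfin.image (fun a => Sym2.map φ s(a, m a)) with hJ
  have hJcard : J.card = Sfin.card := by
    apply Finset.card_image_of_injOn
    intro a ha b hb hab
    have ha' := (Finset.mem_filter.mp ha).2
    have hmap := Sym2.map.injective φ.injective hab
    rw [Sym2.eq_iff] at hmap
    rcases hmap with ⟨h1, h2⟩ | ⟨h1, h2⟩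
    · exact h1
    · exfalso
      have hmab : m a = m b := hmeq a b (by rw [h1, hmg])
      exact ha' (h1.trans hmab.symm)
  have hJT : (J : Set _) ⊆ {e | e ∈ (copyAt (⊤ : SimpleGraph (Fin (r+1))) φ).edgeSet
      ∧ InternalEdge r h e} := by
    intro e he
    simp only [hJ, Finset.coe_image, Set.mem_image, Finset.mem_coe] at he
    obtain ⟨a, ha, rfl⟩ := he
    have ha' := (Finset.mem_filter.mp ha).2
    constructor
    · rw [Sym2.map_pair_eq]
      exact (SimpleGraph.mem_edgeSet _).mpr ⟨a, m a, ha', rfl, rfl⟩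
    · exact ⟨φ a, φ (m a), Sym2.map_pair_eq _ _ _, hsame a (m a) ha' (hmg a).symm⟩
  calc r / 2 ≤ Sfin.card := hScard
    _ = J.card := hJcard.symm
    _ = (J : Set _).ncard := (Set.ncard_coe_finset J).symm
    _ ≤ _ := Set.ncard_le_ncard hJT (Set.toFinite _)


lemma copy_edgeSet (F : SimpleGraph W) (φ : W ↪ V) :
    (copyAt F φ).edgeSet = Sym2.map φ '' F.edgeSet := by
  ext e
  induction e using Sym2.inductionOn with
  | hf x y =>
    constructor
    · intro hm
      rw [SimpleGraph.mem_edgeSet] at hm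
      obtain ⟨a, b, hab, rfl, rfl⟩ := hm
      exact ⟨s(a,b), hab, rfl⟩
    · rintro ⟨p, hp, hmap⟩
      induction p using Sym2.inductionOn with
      | hf a b =>
        rw [Sym2.map_pair_eq] at hmap
        rw [← hmap]
        exact (SimpleGraph.mem_edgeSet _).mpr ⟨a, b, hp, rfl, rfl⟩

lemma tot_internal (r h : ℕ) :
    {e | e ∈ (matchingBlowup r h).edgeSet ∧ InternalEdge r h e}.ncard
      = (r + 2) * h.choose 2 := by
  classical
  set T := {e | e ∈ (matchingBlowup r h).edgeSet ∧ InternalEdge r h e} with hT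
  have hfin : T.Finite := Set.toFinite T
  rw [Set.ncard_eq_toFinset_card T hfin]
  have hcard : ((Finset.univ : Finset (Fin (r+2))) ×ˢ
      (⊤ : SimpleGraph (Fin h)).edgeFinset).card = (r+2) * h.choose 2 := by
    rw [Finset.card_product, SimpleGraph.card_edgeFinset_top_eq_card_choose_two]
    simp
  rw [← hcard]; symm
  apply Finset.card_bij (fun p _ => Sym2.map (fun a => (p.1, a)) p.2) ?hi ?hinj ?hsurj
  case hi =>
    rintro ⟨i, q⟩ hq
    simp only [Finset.mem_product, SimpleGraph.mem_edgeFinset] at hq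
    induction q using Sym2.inductionOn with
    | hf a b =>
      have hab : a ≠ b := hq.2
      rw [Set.Finite.mem_toFinset]
      dsimp only
      constructor
      · rw [Sym2.map_pair_eq]
        exact (SimpleGraph.mem_edgeSet _).mpr ⟨by simp [Prod.ext_iff, hab], Or.inl rfl⟩
      · exact ⟨(i, a), (i, b), Sym2.map_pair_eq _ _ _, rfl⟩
  case hinj =>
    rintro ⟨i, q⟩ hq ⟨j, p⟩ hp heq
    simp only [Finset.mem_product, SimpleGraph.mem_edgeFinset] at hq hp
    induction q using Sym2.inductionOn with
    | hf a b =>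
      induction p using Sym2.inductionOn with
      | hf c d =>
        dsimp only at heq
        rw [Sym2.map_pair_eq, Sym2.map_pair_eq, Sym2.eq_iff] at heq
        rcases heq with ⟨h1, h2⟩ | ⟨h1, h2⟩ <;>
          simp_all [Prod.ext_iff, Sym2.eq_iff]
  case hsurj =>
    intro e he
    rw [Set.Finite.mem_toFinset] at he
    obtain ⟨hedge, x, y, rfl, hxy⟩ := he
    have hne : x ≠ y := ((SimpleGraph.mem_edgeSet _).mp hedge).1
    have hne2 : x.2 ≠ y.2 := fun hc => hne (Prod.ext_iff.mpr ⟨hxy, hc⟩)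
    refine ⟨(x.1, s(x.2, y.2)), ?_, ?_⟩
    · simp only [Finset.mem_product, SimpleGraph.mem_edgeFinset]
      exact ⟨Finset.mem_univ _, (SimpleGraph.mem_edgeSet _).mpr hne2⟩
    · dsimp only
      rw [Sym2.map_pair_eq]
      have hx : (x.1, x.2) = x := rfl
      have hy : (x.1, y.2) = y := Prod.ext_iff.mpr ⟨hxy, rfl⟩
      rw [hx, hy]


lemma ecard_blowup (r h : ℕ) (hre : Even r) (hh : 0 < h) :
    2 * ecard (matchingBlowup r h) = (r + 2) * h * ((r + 1) * h - 1) := by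
  classical
  have hr2 : r % 2 = 0 := Nat.even_iff.mp hre
  set G := matchingBlowup r h with hG
  -- degree of every vertex
  have hdeg : ∀ v : Fin (r+2) × Fin h, G.degree v = (r + 1) * h - 1 := by
    intro v
    have hplt : (if (v.1 : ℕ) % 2 = 0 then (v.1 : ℕ) + 1 else (v.1 : ℕ) - 1) < r + 2 := by
      have := v.1.isLt; split_ifs <;> omega
    set p : Fin (r + 2) := ⟨if (v.1 : ℕ) % 2 = 0 then (v.1 : ℕ) + 1 else (v.1 : ℕ) - 1, hplt⟩
      with hp
    have hnadj : ∀ y : Fin (r+2) × Fin h, ¬ G.Adj v y ↔ (y = v ∨ y.1 = p) := by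
      intro y
      rw [hG]
      show ¬ (v ≠ y ∧ (v.1 = y.1 ∨ (v.1 : ℕ) / 2 ≠ (y.1 : ℕ) / 2)) ↔ _
      have h1 := v.1.isLt
      have h2 := y.1.isLt
      constructor
      · intro hna
        push_neg at hna
        by_cases hvy : v = y
        · exact Or.inl hvy.symm
        · obtain ⟨hne1, hdiv⟩ := hna (Ne.symm (fun hc => hvy hc.symm))
          -- hne1 : ¬ v.1 = y.1? careful
          refine Or.inr ?_
          rw [hp]
          apply Fin.ext
          simp only
          have hne1' : (v.1 : ℕ) ≠ (y.1 : ℕ) := fun hc => hne1 (Fin.ext hc)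
          split_ifs <;> omega
      · rintro (rfl | hyp)
        · intro hc; exact hc.1 rfl
        · rintro ⟨hne, hor⟩
          have hyv : (y.1 : ℕ) = if (v.1 : ℕ) % 2 = 0 then (v.1 : ℕ) + 1 else (v.1 : ℕ) - 1 := by
            rw [hyp, hp]
          rcases hor with h3 | h3
          · have h3' : (v.1 : ℕ) = (y.1 : ℕ) := congrArg Fin.val h3
            split_ifs at hyv <;> omega
          · apply h3
            split_ifs at hyv <;> omega
    have hcompl : (Finset.univ.filter (fun y => ¬ G.Adj v y)).card = h + 1 := by
      have heq : (Finset.univ.filter (fun y => ¬ G.Adj v y))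
          = insert v (({p} : Finset (Fin (r+2))) ×ˢ (Finset.univ : Finset (Fin h))) := by
        ext y
        simp only [Finset.mem_filter, Finset.mem_univ, true_and, Finset.mem_insert,
          Finset.mem_product, Finset.mem_singleton, hnadj]
        tauto
      rw [heq, Finset.card_insert_of_notMem, Finset.card_product]
      · simp
      · simp only [Finset.mem_product, Finset.mem_singleton]
        intro hc
        have : (v.1 : ℕ) = (p : ℕ) := congrArg Fin.val hc.1
        rw [hp] at this
        simp only at this
        split_ifs at this <;> omega
    have htot := Finset.card_filter_add_card_filter_not
      (s := (Finset.univ : Finset (Fin (r+2) × Fin h))) (p := fun y => G.Adj v y)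
    rw [Finset.card_univ] at htot
    simp only [Fintype.card_prod, Fintype.card_fin] at htot
    have hdeg' : G.degree v = (Finset.univ.filter (fun y => G.Adj v y)).card := by
      rw [← SimpleGraph.card_neighborFinset_eq_degree, SimpleGraph.neighborFinset_eq_filter]
    rw [hdeg']
    have : (Finset.univ.filter (fun y => G.Adj v y)).card + (h + 1) = (r+2) * h := by
      rw [← hcompl]; exact htot
    have hmul : (r + 2) * h = (r + 1) * h + h := by ring
    have hle : 1 ≤ (r + 1) * h := Nat.one_le_iff_ne_zero.mpr (by positivity)
    omega
  have hsum := SimpleGraph.sum_degrees_eq_twice_card_edges G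
  rw [Finset.sum_congr rfl (fun v _ => hdeg v)] at hsum
  rw [Finset.sum_const, Finset.card_univ, Fintype.card_prod, Fintype.card_fin,
    Fintype.card_fin, smul_eq_mul] at hsum
  have hecard : ecard G = G.edgeFinset.card := by
    rw [ecard, Nat.card_eq_fintype_card, SimpleGraph.edgeFinset_card]
  rw [hecard, ← hsum]

lemma part2 {r h : ℕ} (hr : 2 ≤ r) (hre : Even r)
    (S : Set (Fin (r + 1) ↪ Fin (r + 2) × Fin h))
    (hle : ∀ φ ∈ S, copyAt (⊤ : SimpleGraph (Fin (r + 1))) φ ≤ matchingBlowup r h)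
    (hdisj : S.Pairwise fun φ ψ => Disjoint (copyAt (⊤ : SimpleGraph (Fin (r + 1))) φ).edgeSet
        (copyAt (⊤ : SimpleGraph (Fin (r + 1))) ψ).edgeSet) :
    Nat.card S ≤ (r + 2) * h.choose 2 / (r / 2) := by
  classical
  set Sfin := (Set.toFinite S).toFinset with hSfin
  have hNS : Nat.card S = Sfin.card := by
    rw [Nat.card_coe_set_eq, Set.ncard_eq_toFinset_card S (Set.toFinite S)]
  set I := fun φ : Fin (r+1) ↪ Fin (r+2) × Fin h =>
    (Set.toFinite {e | e ∈ (copyAt (⊤ : SimpleGraph (Fin (r+1))) φ).edgeSet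
      ∧ InternalEdge r h e}).toFinset with hI
  have hIcard : ∀ φ ∈ Sfin, r / 2 ≤ (I φ).card := by
    intro φ hφ
    have h1 := (Set.ncard_eq_toFinset_card _ (Set.toFinite {e |
      e ∈ (copyAt (⊤ : SimpleGraph (Fin (r+1))) φ).edgeSet ∧ InternalEdge r h e})).symm
    rw [hI]
    rw [h1]
    exact part1 hre φ (hle φ (by rwa [Set.Finite.mem_toFinset] at hφ))
  have hdisj' : ∀ φ ∈ Sfin, ∀ ψ ∈ Sfin, φ ≠ ψ → Disjoint (I φ) (I ψ) := by
    intro φ hφ ψ hψ hne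
    rw [hSfin, Set.Finite.mem_toFinset] at hφ hψ
    have hD := hdisj hφ hψ hne
    rw [Finset.disjoint_left]
    intro e he1 he2
    rw [hI, Set.Finite.mem_toFinset] at he1 he2
    exact (Set.disjoint_left.mp hD he1.1) he2.1
  have hsub : Sfin.biUnion I ⊆ (Set.toFinite {e | e ∈ (matchingBlowup r h).edgeSet
      ∧ InternalEdge r h e}).toFinset := by
    intro e he
    rw [Finset.mem_biUnion] at he
    obtain ⟨φ, hφ, he⟩ := he
    rw [hI, Set.Finite.mem_toFinset] at he
    rw [Set.Finite.mem_toFinset]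
    rw [hSfin, Set.Finite.mem_toFinset] at hφ
    exact ⟨SimpleGraph.edgeSet_mono (hle φ hφ) he.1, he.2⟩
  have hkey : Sfin.card * (r / 2) ≤ (r + 2) * h.choose 2 := by
    calc Sfin.card * (r / 2) = ∑ _φ ∈ Sfin, (r / 2) := by
          rw [Finset.sum_const, smul_eq_mul]
      _ ≤ ∑ φ ∈ Sfin, (I φ).card := Finset.sum_le_sum hIcard
      _ = (Sfin.biUnion I).card := (Finset.card_biUnion hdisj').symm
      _ ≤ ((Set.toFinite {e | e ∈ (matchingBlowup r h).edgeSet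
            ∧ InternalEdge r h e}).toFinset).card := Finset.card_le_card hsub
      _ = (r + 2) * h.choose 2 := by
          rw [← Set.ncard_eq_toFinset_card _ (Set.toFinite _), tot_internal]
  have hpos : 0 < r / 2 := by omega
  rw [hNS]
  exact (Nat.le_div_iff_mul_le hpos).mpr hkey

lemma part3 {r s h : ℕ} (hr : 2 ≤ r) (hre : Even r) (hs : 1 ≤ s)
    (hh : h = (s * r + 1) * (r + 1)) :
    (r + 2) * h.choose 2 / (r / 2) < ecard (matchingBlowup r h) / (r + 1).choose 2 := by
  obtain ⟨k, hk⟩ := hre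
  have hk1 : 1 ≤ k := by omega
  have hrk : r / 2 = k := by omega
  have hhpos : 1 ≤ h := by
    have : 0 < (s * r + 1) * (r + 1) := by positivity
    omega
  obtain ⟨m, hm⟩ : ∃ m, h = m + 1 := ⟨h - 1, by omega⟩
  set t := h * (h - 1) / 2 with hts
  have hteven : h * (h - 1) = 2 * t := by
    have : Even (h * (h - 1)) := by
      rw [hm]
      simp only [Nat.add_sub_cancel]
      have := Nat.even_mul_succ_self m
      rwa [mul_comm] at this
    obtain ⟨w, hw⟩ := this
    rw [hts]
    omega
  have hch : h.choose 2 = t := by rw [Nat.choose_two_right]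
  have hA : (r + 2) * h.choose 2 = (k + 1) * (2 * t) := by
    rw [hch, hk]; ring
  have hc : (r + 1).choose 2 = k * (2 * k + 1) := by
    rw [Nat.choose_two_right, hk]
    simp only [Nat.add_sub_cancel]
    have h2 : (k + k + 1) * (k + k) = (k * (2 * k + 1)) * 2 := by ring
    rw [h2, Nat.mul_div_cancel _ (by norm_num)]
  have hE : 2 * ecard (matchingBlowup r h) = (2 * k + 2) * h * ((2 * k + 1) * h - 1) := by
    rw [ecard_blowup r h ⟨k, hk⟩ (by omega)]
    rw [hk]
    have hx : k + k + 2 = 2 * k + 2 := by omega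
    have hy : k + k + 1 = 2 * k + 1 := by omega
    rw [hx, hy]
  rw [hrk]
  set q := (r + 2) * h.choose 2 / k with hq
  have hqk : q * k ≤ (r + 2) * h.choose 2 := Nat.div_mul_le_self _ _
  rw [hA] at hqk
  -- main inequality
  have hmain : (q + 1) * ((r + 1).choose 2) ≤ ecard (matchingBlowup r h) := by
    rw [hc]
    refine Nat.le_of_mul_le_mul_left ?_ (show 0 < 2 by norm_num)
    rw [hE]
    obtain ⟨u, hu⟩ : ∃ u, (2 * k + 1) * h = u + 1 :=
      ⟨(2 * k + 1) * h - 1, by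
        have : 0 < (2 * k + 1) * h := Nat.mul_pos (by omega) (by omega)
        omega⟩
    rw [hu]
    simp only [Nat.add_sub_cancel]
    have ht2 : (m + 1) * m = 2 * t := by
      rw [← hteven, hm]; simp [Nat.add_sub_cancel]
    have hu2 : (2 * k + 1) * (m + 1) = u + 1 := by rw [← hm]; exact hu
    rw [hm]
    nlinarith [hqk, ht2, hu2, hk1]
  have hcpos : 0 < (r + 1).choose 2 := Nat.choose_pos (by omega)
  have hdiv : q + 1 ≤ ecard (matchingBlowup r h) / (r + 1).choose 2 :=
    (Nat.le_div_iff_mul_le hcpos).mpr hmain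
  omega


/-- Let `r ≥ 2` be even, `h = (sr+1)(r+1)`, and `G` the blow-up of `K_{r+2}` minus a
perfect matching by cliques `K_h`. Every copy of `K_{r+1}` in `G` contains at least
`r/2` internal edges; hence any family of pairwise edge-disjoint copies of `K_{r+1}`
has size at most `(r+2)·binom(h,2)/(r/2)`, which is strictly smaller than
`e(G)/binom(r+1,2)`, and so `G` has no `K_{r+1}`-decomposition. -/
theorem matchingBlowup_not_decomposable (r s h : ℕ) (hr : 2 ≤ r)
    (hre : Even r) (hs : 1 ≤ s) (hh : h = (s * r + 1) * (r + 1)) :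
    (∀ φ : Fin (r + 1) ↪ Fin (r + 2) × Fin h,
      copyAt (⊤ : SimpleGraph (Fin (r + 1))) φ ≤ matchingBlowup r h →
      r / 2 ≤ Nat.card
        ↥{e | e ∈ (copyAt (⊤ : SimpleGraph (Fin (r + 1))) φ).edgeSet ∧ InternalEdge r h e}) ∧
    (∀ S : Set (Fin (r + 1) ↪ Fin (r + 2) × Fin h),
      (∀ φ ∈ S, copyAt (⊤ : SimpleGraph (Fin (r + 1))) φ ≤ matchingBlowup r h) →
      (S.Pairwise fun φ ψ => Disjoint (copyAt (⊤ : SimpleGraph (Fin (r + 1))) φ).edgeSet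
        (copyAt (⊤ : SimpleGraph (Fin (r + 1))) ψ).edgeSet) →
      Nat.card S ≤ (r + 2) * h.choose 2 / (r / 2)) ∧
    (r + 2) * h.choose 2 / (r / 2) < ecard (matchingBlowup r h) / (r + 1).choose 2 ∧
    ¬ HasDecomposition (⊤ : SimpleGraph (Fin (r + 1))) (matchingBlowup r h) := by
  classical
  have p3 := part3 hr hre hs hh
  refine ⟨?_, fun S hle hdisj => part2 hr hre S hle hdisj, p3, ?_⟩
  · intro φ hφ
    rw [Nat.card_coe_set_eq]
    exact part1 hre φ hφ
  rintro ⟨S, hle, hcover, hdisj⟩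
  have hN := part2 hr hre S hle hdisj
  have hcpos : 0 < (r + 1).choose 2 := Nat.choose_pos (by omega)
  set Sfin := (Set.toFinite S).toFinset with hSfin
  have hNS : Nat.card ↥S = Sfin.card := by
    rw [Nat.card_coe_set_eq, Set.ncard_eq_toFinset_card S (Set.toFinite S)]
  set J := fun φ : Fin (r+1) ↪ Fin (r+2) × Fin h =>
    (Set.toFinite (copyAt (⊤ : SimpleGraph (Fin (r+1))) φ).edgeSet).toFinset with hJ
  have hcov : (matchingBlowup r h).edgeFinset ⊆ Sfin.biUnion J := by
    intro e he
    rw [SimpleGraph.mem_edgeFinset] at he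
    obtain ⟨φ, hφS, heφ⟩ := hcover e he
    rw [Finset.mem_biUnion]
    exact ⟨φ, (Set.Finite.mem_toFinset _).mpr hφS, (Set.Finite.mem_toFinset _).mpr heφ⟩
  have hcopycard : ∀ φ : Fin (r+1) ↪ Fin (r+2) × Fin h, (J φ).card ≤ (r + 1).choose 2 := by
    intro φ
    rw [hJ]
    rw [← Set.ncard_eq_toFinset_card _ (Set.toFinite _)]
    rw [copy_edgeSet]
    calc (Sym2.map φ '' (⊤ : SimpleGraph (Fin (r+1))).edgeSet).ncard
        ≤ (⊤ : SimpleGraph (Fin (r+1))).edgeSet.ncard := Set.ncard_image_le (Set.toFinite _)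
      _ = (r + 1).choose 2 := by
          rw [← Nat.card_coe_set_eq, Nat.card_eq_fintype_card,
            ← SimpleGraph.edgeFinset_card,
            SimpleGraph.card_edgeFinset_top_eq_card_choose_two, Fintype.card_fin]
  have hecard : ecard (matchingBlowup r h) = (matchingBlowup r h).edgeFinset.card := by
    rw [ecard, Nat.card_eq_fintype_card, SimpleGraph.edgeFinset_card]
  have hbound : ecard (matchingBlowup r h) ≤ Sfin.card * (r + 1).choose 2 := by
    rw [hecard]
    calc (matchingBlowup r h).edgeFinset.card
        ≤ (Sfin.biUnion J).card := Finset.card_le_card hcov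
      _ ≤ ∑ φ ∈ Sfin, (J φ).card := Finset.card_biUnion_le
      _ ≤ Sfin.card * (r + 1).choose 2 := by
          rw [← smul_eq_mul]
          exact Finset.sum_le_card_nsmul _ _ _ (fun φ _ => hcopycard φ)
  have hdivle : ecard (matchingBlowup r h) / (r + 1).choose 2 ≤ Sfin.card := by
    calc ecard (matchingBlowup r h) / (r + 1).choose 2
        ≤ Sfin.card * (r + 1).choose 2 / (r + 1).choose 2 := Nat.div_le_div_right hbound
      _ = Sfin.card := Nat.mul_div_cancel _ hcpos
  rw [← hNS] at hdivle
  exact absurd hN (not_le.mpr (lt_of_lt_of_le p3 hdivle))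

end Paper
end

section
/- The relation ~_F is transitive in the following sense: if H, H', H'' are pairwise vertex-disjoint graphs, T_1 is an (H,H')_F-transformer, T_2 is an (H',H'')_F-transformer, and V(T_1) ∩ V(T_2) = V(H'), then T_1 ∪ H' ∪ T_2 is an (H,H'')_F-transformer. -/
open SimpleGraph

namespace Paper

variable {V W : Type*}

/-- `T` is an `(H, H')_F`-transformer: `T` is edge-disjoint from `H` and `H'`,
`V(H ∪ H') ⊆ V(T)`, `T` has no edges inside `V(H ∪ H')`, and both `T ∪ H` and
`T ∪ H'` have `F`-decompositions. -/
def IsTransformer {V W : Type*} (F : SimpleGraph W) (H H' T : SimpleGraph V) : Prop :=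
  Disjoint H.edgeSet T.edgeSet ∧ Disjoint H'.edgeSet T.edgeSet ∧
  H.support ∪ H'.support ⊆ T.support ∧
  (∀ x ∈ H.support ∪ H'.support, ∀ y ∈ H.support ∪ H'.support, ¬ T.Adj x y) ∧
  HasDecomposition F (T ⊔ H) ∧ HasDecomposition F (T ⊔ H')

lemma edgeDisjoint_of_adj {G G' : SimpleGraph V}
    (h : ∀ a b, G.Adj a b → G'.Adj a b → False) :
    Disjoint G.edgeSet G'.edgeSet := by
  rw [Set.disjoint_left]
  intro e he he'
  induction e with
  | h a b => exact h a b he he'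

lemma edgeDisjoint_of_support {G G' : SimpleGraph V}
    (h : Disjoint G.support G'.support) :
    Disjoint G.edgeSet G'.edgeSet := by
  refine edgeDisjoint_of_adj fun a b ha hb => ?_
  exact Set.disjoint_left.mp h ⟨b, ha⟩ ⟨b, hb⟩

lemma hasDecomposition_sup {F : SimpleGraph W} {G₁ G₂ : SimpleGraph V}
    (hd : Disjoint G₁.edgeSet G₂.edgeSet)
    (h₁ : HasDecomposition F G₁) (h₂ : HasDecomposition F G₂) :
    HasDecomposition F (G₁ ⊔ G₂) := by
  obtain ⟨s₁, hle₁, hcov₁, hp₁⟩ := h₁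
  obtain ⟨s₂, hle₂, hcov₂, hp₂⟩ := h₂
  refine ⟨s₁ ∪ s₂, ?_, ?_, ?_⟩
  · rintro φ (hφ | hφ)
    · exact (hle₁ φ hφ).trans le_sup_left
    · exact (hle₂ φ hφ).trans le_sup_right
  · intro e he
    rw [edgeSet_sup] at he
    rcases he with he | he
    · obtain ⟨φ, hφ, h⟩ := hcov₁ e he
      exact ⟨φ, Or.inl hφ, h⟩
    · obtain ⟨φ, hφ, h⟩ := hcov₂ e he
      exact ⟨φ, Or.inr hφ, h⟩
  · rintro φ (hφ | hφ) ψ (hψ | hψ) hne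
    · exact hp₁ hφ hψ hne
    · exact hd.mono (edgeSet_mono (hle₁ φ hφ)) (edgeSet_mono (hle₂ ψ hψ))
    · exact (hd.mono (edgeSet_mono (hle₁ ψ hψ)) (edgeSet_mono (hle₂ φ hφ))).symm
    · exact hp₂ hφ hψ hne

/-- Transitivity of the transformer relation: if `H, H', H''` are pairwise
vertex-disjoint, `T₁` is an `(H, H')_F`-transformer, `T₂` is an `(H', H'')_F`-transformer
and `V(T₁) ∩ V(T₂) = V(H')`, then `T₁ ∪ H' ∪ T₂` is an `(H, H'')_F`-transformer. -/
theorem isTransformer_trans {V W : Type*} (F : SimpleGraph W)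
    (H H' H'' T₁ T₂ : SimpleGraph V)
    (hd₁ : Disjoint H.support H'.support)
    (hd₂ : Disjoint H'.support H''.support)
    (hd₃ : Disjoint H.support H''.support)
    (h₁ : IsTransformer F H H' T₁)
    (h₂ : IsTransformer F H' H'' T₂)
    (hV : T₁.support ∩ T₂.support = H'.support) :
    IsTransformer F H H'' (T₁ ⊔ H' ⊔ T₂) := by
  obtain ⟨e1H, e1H', sup1, no1, dec1H, dec1H'⟩ := h₁
  obtain ⟨e2H', e2H'', sup2, no2, dec2H', dec2H''⟩ := h₂
  have HsubT₁ : H.support ⊆ T₁.support := (Set.subset_union_left).trans sup1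
  have H'subT₁ : H'.support ⊆ T₁.support := (Set.subset_union_right).trans sup1
  have H'subT₂ : H'.support ⊆ T₂.support := (Set.subset_union_left).trans sup2
  have H''subT₂ : H''.support ⊆ T₂.support := (Set.subset_union_right).trans sup2
  -- vertices in both T₁ and T₂ lie in H'
  have hboth : ∀ x, x ∈ T₁.support → x ∈ T₂.support → x ∈ H'.support := by
    intro x h1 h2
    rw [← hV]; exact ⟨h1, h2⟩
  have c1 : Disjoint H.edgeSet T₂.edgeSet := by
    refine edgeDisjoint_of_adj fun a b ha hb => ?_
    have haH : a ∈ H.support := ⟨b, ha⟩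
    have : a ∈ H'.support := hboth a (HsubT₁ haH) ⟨b, hb⟩
    exact Set.disjoint_left.mp hd₁ haH this
  have c2 : Disjoint H''.edgeSet T₁.edgeSet := by
    refine edgeDisjoint_of_adj fun a b ha hb => ?_
    have haH : a ∈ H''.support := ⟨b, ha⟩
    have : a ∈ H'.support := hboth a ⟨b, hb⟩ (H''subT₂ haH)
    exact Set.disjoint_left.mp hd₂ this haH
  have c3 : Disjoint H.edgeSet H'.edgeSet := edgeDisjoint_of_support hd₁
  have c4 : Disjoint H''.edgeSet H'.edgeSet := edgeDisjoint_of_support hd₂.symm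
  have c6 : Disjoint T₁.edgeSet T₂.edgeSet := by
    refine edgeDisjoint_of_adj fun a b ha hb => ?_
    have haH' : a ∈ H'.support := hboth a ⟨b, ha⟩ ⟨b, hb⟩
    have hbH' : b ∈ H'.support := hboth b ⟨a, ha.symm⟩ ⟨a, hb.symm⟩
    exact no1 a (Or.inr haH') b (Or.inr hbH') ha
  refine ⟨?_, ?_, ?_, ?_, ?_, ?_⟩
  · rw [edgeSet_sup, edgeSet_sup]
    exact Disjoint.union_right (Disjoint.union_right e1H c3) c1
  · rw [edgeSet_sup, edgeSet_sup]
    exact Disjoint.union_right (Disjoint.union_right c2.symm.symm c4) e2H''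
  · rintro x (hx | hx)
    · exact support_mono (le_sup_left.trans le_sup_left) (HsubT₁ hx)
    · exact support_mono le_sup_right (H''subT₂ hx)
  · intro x hx y hy hadj
    have hxH' : x ∉ H'.support := by
      rcases hx with hx | hx
      · exact fun h => Set.disjoint_left.mp hd₁ hx h
      · exact fun h => Set.disjoint_left.mp hd₂ h hx
    have hyH' : y ∉ H'.support := by
      rcases hy with hy | hy
      · exact fun h => Set.disjoint_left.mp hd₁ hy h
      · exact fun h => Set.disjoint_left.mp hd₂ h hy
    rcases hadj with (h | h) | h
    · -- T₁ edge
      have hx1 : x ∈ T₁.support := ⟨y, h⟩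
      have hy1 : y ∈ T₁.support := ⟨x, h.symm⟩
      have hxH : x ∈ H.support := by
        rcases hx with hx | hx
        · exact hx
        · exact absurd (hboth x hx1 (H''subT₂ hx)) hxH'
      have hyH : y ∈ H.support := by
        rcases hy with hy | hy
        · exact hy
        · exact absurd (hboth y hy1 (H''subT₂ hy)) hyH'
      exact no1 x (Or.inl hxH) y (Or.inl hyH) h
    · exact hxH' ⟨y, h⟩
    · -- T₂ edge
      have hx2 : x ∈ T₂.support := ⟨y, h⟩
      have hy2 : y ∈ T₂.support := ⟨x, h.symm⟩
      have hxH : x ∈ H''.support := by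
        rcases hx with hx | hx
        · exact absurd (hboth x (HsubT₁ hx) hx2) hxH'
        · exact hx
      have hyH : y ∈ H''.support := by
        rcases hy with hy | hy
        · exact absurd (hboth y (HsubT₁ hy) hy2) hyH'
        · exact hy
      exact no2 x (Or.inr hxH) y (Or.inr hyH) h
  · have heq : T₁ ⊔ H' ⊔ T₂ ⊔ H = (T₁ ⊔ H) ⊔ (T₂ ⊔ H') := by
      ext x y; simp only [sup_adj]; tauto
    rw [heq]
    refine hasDecomposition_sup ?_ dec1H dec2H'
    rw [edgeSet_sup, edgeSet_sup]
    exact Set.disjoint_union_left.mpr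
      ⟨Set.disjoint_union_right.mpr ⟨c6, e1H'.symm⟩,
       Set.disjoint_union_right.mpr ⟨c1, c3⟩⟩
  · have heq : T₁ ⊔ H' ⊔ T₂ ⊔ H'' = (T₂ ⊔ H'') ⊔ (T₁ ⊔ H') := by
      ext x y; simp only [sup_adj]; tauto
    rw [heq]
    refine hasDecomposition_sup ?_ dec2H'' dec1H'
    rw [edgeSet_sup, edgeSet_sup]
    exact Set.disjoint_union_left.mpr
      ⟨Set.disjoint_union_right.mpr ⟨c6.symm, e2H'.symm⟩,
       Set.disjoint_union_right.mpr ⟨c2, c4⟩⟩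

end Paper
end

section
/- Let X_1, ..., X_n be Bernoulli random variables such that for every s and every assignment of values to X_1, ..., X_{s-1}, the conditional probability that X_s = 1 is at most p. Let X = X_1 + ... + X_n and let B be binomial with parameters n, p. Then P(X ≥ a) ≤ P(B ≥ a) for every a ≥ 0. -/
open MeasureTheory

private lemma tail_zero {p : ℝ} (s : ℕ) :
    ∑ k ∈ Finset.Icc 0 s, (s.choose k : ℝ) * p ^ k * (1 - p) ^ (s - k) = 1 := by
  have h : Finset.Icc 0 s = Finset.range (s+1) := by ext k; simp
  have h2 := add_pow p (1-p) s
  simp only [add_sub_cancel, one_pow] at h2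
  rw [h, show ∑ k ∈ Finset.range (s+1), (s.choose k : ℝ) * p ^ k * (1 - p) ^ (s - k)
      = ∑ k ∈ Finset.range (s+1), p ^ k * (1 - p) ^ (s - k) * (s.choose k : ℝ) from
    Finset.sum_congr rfl fun k _ => by ring, ← h2]

private lemma tail_succ {p : ℝ} (s b : ℕ) :
    ∑ k ∈ Finset.Icc (b+1) (s+1), ((s+1).choose k : ℝ) * p ^ k * (1-p) ^ (s+1-k)
      = (1-p) * ∑ k ∈ Finset.Icc (b+1) s, (s.choose k : ℝ) * p ^ k * (1-p) ^ (s-k)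
        + p * ∑ k ∈ Finset.Icc b s, (s.choose k : ℝ) * p ^ k * (1-p) ^ (s-k) := by
  rcases le_or_gt b s with hbs | hbs
  · have hmap : Finset.Icc (b+1) (s+1)
        = Finset.map ⟨fun j => j+1, add_left_injective 1⟩ (Finset.Icc b s) := by
      ext k
      simp only [Finset.mem_Icc, Finset.mem_map, Function.Embedding.coeFn_mk]
      constructor
      · intro h; exact ⟨k - 1, by omega, by omega⟩
      · rintro ⟨a, ha, rfl⟩; omega
    have h2 : ∑ k ∈ Finset.Icc (b+1) (s+1), (s.choose k : ℝ) * p ^ k * (1-p) ^ (s+1-k)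
        = (1-p) * ∑ k ∈ Finset.Icc (b+1) s, (s.choose k : ℝ) * p ^ k * (1-p) ^ (s-k) := by
      rw [Finset.sum_Icc_succ_top (by omega), Nat.choose_succ_self]
      push_cast
      rw [Finset.mul_sum]
      simp only [zero_mul, add_zero]
      refine Finset.sum_congr rfl fun k hk => ?_
      have hk' : k ≤ s := (Finset.mem_Icc.mp hk).2
      rw [show s + 1 - k = (s - k) + 1 by omega]
      ring
    have h3 : ∑ j ∈ Finset.Icc b s, ((s+1).choose (j+1) : ℝ) * p ^ (j+1) * (1-p) ^ (s+1-(j+1))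
        = (∑ j ∈ Finset.Icc b s, (s.choose (j+1) : ℝ) * p ^ (j+1) * (1-p) ^ (s+1-(j+1)))
          + p * ∑ j ∈ Finset.Icc b s, (s.choose j : ℝ) * p ^ j * (1-p) ^ (s-j) := by
      rw [Finset.mul_sum, ← Finset.sum_add_distrib]
      refine Finset.sum_congr rfl fun j hj => ?_
      have hj' : j ≤ s := (Finset.mem_Icc.mp hj).2
      rw [Nat.choose_succ_succ]
      push_cast
      simp only [Nat.succ_eq_add_one, Nat.succ_sub_succ]
      ring
    rw [hmap, Finset.sum_map] at h2 ⊢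
    simp only [Function.Embedding.coeFn_mk] at h2 ⊢
    rw [h3, h2]
    try ring
  · rw [Finset.Icc_eq_empty (by omega), Finset.Icc_eq_empty (by omega),
      Finset.Icc_eq_empty (by omega)]
    simp

section Aux
variable {Ω : Type*} [MeasurableSpace Ω] (μ : Measure Ω) [IsProbabilityMeasure μ]
  (n : ℕ) (X : Fin n → Ω → ℕ)

-- key step: conditional bound summed over assignments
private lemma step_bound
    (hmeas : ∀ i, Measurable (X i))
    (hber : ∀ i ω, X i ω ≤ 1)
    (p : ℝ) (hp0 : 0 ≤ p)
    (hcond : ∀ (s : Fin n) (x : Fin n → ℕ), (∀ i, x i ≤ 1) →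
      (μ ({ω | X s ω = 1} ∩ {ω | ∀ i < s, X i ω = x i})).toReal ≤
        p * (μ {ω | ∀ i < s, X i ω = x i}).toReal)
    (s : ℕ) (hs : s < n) (b : ℕ) :
    (μ ({ω | (∑ i ∈ Finset.univ.filter (fun i : Fin n => (i:ℕ) < s), X i ω) = b}
        ∩ {ω | X ⟨s, hs⟩ ω = 1})).toReal ≤
      p * (μ {ω | (∑ i ∈ Finset.univ.filter (fun i : Fin n => (i:ℕ) < s), X i ω) = b}).toReal := by
  classical
  set filt := Finset.univ.filter (fun i : Fin n => (i:ℕ) < s) with hfilt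
  set D : (Fin n → ℕ) → Set Ω := fun x => {ω | ∀ i : Fin n, (i:ℕ) < s → X i ω = x i} with hD
  set F : Finset (Fin n → ℕ) :=
    (Fintype.piFinset fun _ : Fin n => ({0,1} : Finset ℕ)).filter
      (fun x => (∑ i ∈ filt, x i) = b ∧ ∀ i : Fin n, ¬((i:ℕ) < s) → x i = 0) with hF
  have hDmeas : ∀ x, MeasurableSet (D x) := by
    intro x
    have : D x = ⋂ (i : Fin n), ⋂ (_ : (i:ℕ) < s), X i ⁻¹' {x i} := by
      ext ω; simp [hD, Set.mem_iInter]
    rw [this]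
    exact MeasurableSet.iInter fun i => MeasurableSet.iInter fun _ =>
      hmeas i (measurableSet_singleton _)
  have hBeq : {ω | (∑ i ∈ filt, X i ω) = b} = ⋃ x ∈ F, D x := by
    ext ω
    simp only [Set.mem_setOf_eq, Set.mem_iUnion, exists_prop]
    constructor
    · intro h
      refine ⟨fun i => if (i:ℕ) < s then X i ω else 0, ?_, ?_⟩
      · rw [hF, Finset.mem_filter]
        refine ⟨?_, ?_, ?_⟩
        · rw [Fintype.mem_piFinset]
          intro i
          by_cases hi : (i:ℕ) < s <;> simp [hi]
          have := hber i ω; interval_cases (X i ω) <;> simp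
        · rw [← h]
          refine Finset.sum_congr rfl fun i hi => ?_
          rw [hfilt, Finset.mem_filter] at hi
          simp [hi.2]
        · intro i hi; simp [hi]
      · intro i hi; simp [hD, hi]
    · rintro ⟨x, hxF, hxD⟩
      rw [hF, Finset.mem_filter] at hxF
      rw [← hxF.2.1]
      refine Finset.sum_congr rfl fun i hi => ?_
      rw [hfilt, Finset.mem_filter] at hi
      exact hxD i hi.2
  have hdisjD : (F : Set (Fin n → ℕ)).PairwiseDisjoint D := by
    intro x hx y hy hxy
    simp only [Function.onFun, Set.disjoint_left]
    intro ω hωx hωy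
    apply hxy
    funext i
    by_cases hi : (i:ℕ) < s
    · rw [← hωx i hi, ← hωy i hi]
    · rw [Finset.mem_coe, hF, Finset.mem_filter] at hx hy
      rw [hx.2.2 i hi, hy.2.2 i hi]
  have hmuB : μ {ω | (∑ i ∈ filt, X i ω) = b} = ∑ x ∈ F, μ (D x) := by
    rw [hBeq]
    exact measure_biUnion_finset hdisjD fun x _ => hDmeas x
  have hBC : {ω | (∑ i ∈ filt, X i ω) = b} ∩ {ω | X ⟨s, hs⟩ ω = 1}
      = ⋃ x ∈ F, ({ω | X ⟨s, hs⟩ ω = 1} ∩ D x) := by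
    rw [hBeq, Set.iUnion₂_inter]
    ext ω; simp [Set.mem_iUnion, and_comm]
  have hmuBC : μ ({ω | (∑ i ∈ filt, X i ω) = b} ∩ {ω | X ⟨s, hs⟩ ω = 1})
      = ∑ x ∈ F, μ ({ω | X ⟨s, hs⟩ ω = 1} ∩ D x) := by
    rw [hBC]
    refine measure_biUnion_finset ?_ fun x _ => (hmeas _ (measurableSet_singleton 1)).inter (hDmeas x)
    exact fun x hx y hy hxy =>
      ((hdisjD hx hy hxy).mono Set.inter_subset_right Set.inter_subset_right)
  have hDalt : ∀ x : Fin n → ℕ, {ω | ∀ i < (⟨s, hs⟩ : Fin n), X i ω = x i} = D x := by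
    intro x; ext ω
    simp only [Set.mem_setOf_eq, hD, Fin.lt_def]
  rw [hmuB, hmuBC, ENNReal.toReal_sum (fun x _ => measure_ne_top μ _),
    ENNReal.toReal_sum (fun x _ => measure_ne_top μ _), Finset.mul_sum]
  refine Finset.sum_le_sum fun x hx => ?_
  have hx1 : ∀ i, x i ≤ 1 := by
    rw [hF, Finset.mem_filter, Fintype.mem_piFinset] at hx
    intro i
    have := hx.1 i
    simp at this
    omega
  have := hcond ⟨s, hs⟩ x hx1
  rwa [hDalt x] at this
end Aux

private lemma tail_nonneg' {p : ℝ} (hp0 : 0 ≤ p) (hp1 : p ≤ 1) (s a : ℕ) :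
    0 ≤ ∑ k ∈ Finset.Icc a s, (s.choose k : ℝ) * p ^ k * (1 - p) ^ (s - k) := by
  refine Finset.sum_nonneg fun k _ => ?_
  have h : (0:ℝ) ≤ 1 - p := by linarith
  positivity

/-- (Jain's lemma.) Let `X 0, …, X (n-1)` be Bernoulli random variables such that,
conditionally on any assignment of values to the earlier variables, the probability
that `X s = 1` is at most `p`. Then for every `a`, the probability that
`X 0 + ⋯ + X (n-1) ≥ a` is at most the probability that a binomial random variable
with parameters `n, p` is at least `a`. -/
theorem bernoulli_dominated_by_binomial
    {Ω : Type*} [MeasurableSpace Ω] (μ : Measure Ω) [IsProbabilityMeasure μ]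
    (n : ℕ) (X : Fin n → Ω → ℕ)
    (hmeas : ∀ i, Measurable (X i))
    (hber : ∀ i ω, X i ω ≤ 1)
    (p : ℝ) (hp0 : 0 ≤ p) (hp1 : p ≤ 1)
    (hcond : ∀ (s : Fin n) (x : Fin n → ℕ), (∀ i, x i ≤ 1) →
      (μ ({ω | X s ω = 1} ∩ {ω | ∀ i < s, X i ω = x i})).toReal ≤
        p * (μ {ω | ∀ i < s, X i ω = x i}).toReal)
    (a : ℕ) :
    (μ {ω | a ≤ ∑ i, X i ω}).toReal ≤
      ∑ k ∈ Finset.Icc a n, (n.choose k : ℝ) * p ^ k * (1 - p) ^ (n - k) := by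
  classical
  set S : ℕ → Ω → ℕ :=
    fun s ω => ∑ i ∈ Finset.univ.filter (fun i : Fin n => (i:ℕ) < s), X i ω with hSdef
  have hSmeas : ∀ s, Measurable (S s) :=
    fun s => Finset.measurable_sum _ fun i _ => hmeas i
  have hAmeas : ∀ s a, MeasurableSet {ω | a ≤ S s ω} := by
    intro s a
    exact hSmeas s measurableSet_Ici
  have hBmeas : ∀ s b, MeasurableSet {ω | S s ω = b} := by
    intro s b
    exact hSmeas s (measurableSet_singleton b)
  have key : ∀ s, s ≤ n → ∀ a : ℕ, (μ {ω | a ≤ S s ω}).toReal ≤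
      ∑ k ∈ Finset.Icc a s, (s.choose k : ℝ) * p ^ k * (1 - p) ^ (s - k) := by
    intro s
    induction s with
    | zero =>
      intro _ a
      have hS0 : ∀ ω, S 0 ω = 0 := by
        intro ω
        rw [hSdef]
        simp
      match a with
      | 0 =>
        rw [tail_zero]
        calc (μ {ω | 0 ≤ S 0 ω}).toReal ≤ (μ Set.univ).toReal :=
              ENNReal.toReal_mono (measure_ne_top μ _) (measure_mono (Set.subset_univ _))
          _ = 1 := by simp
      | (b+1) =>
        have : {ω | b + 1 ≤ S 0 ω} = ∅ := by
          ext ω; simp [hS0]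
        rw [this]
        simp only [measure_empty, ENNReal.toReal_zero]
        exact tail_nonneg' hp0 hp1 0 (b+1)
    | succ s ih =>
      intro hs1 a
      have hs : s < n := hs1
      have ihs := ih (le_of_lt hs)
      -- S (s+1) = S s + X ⟨s,hs⟩
      have hsucc : ∀ ω, S (s+1) ω = S s ω + X ⟨s, hs⟩ ω := by
        intro ω
        simp only [hSdef]
        have hins : Finset.univ.filter (fun i : Fin n => (i:ℕ) < s+1)
            = insert (⟨s, hs⟩ : Fin n) (Finset.univ.filter (fun i : Fin n => (i:ℕ) < s)) := by
          ext i
          simp only [Finset.mem_filter, Finset.mem_univ, true_and, Finset.mem_insert, Fin.ext_iff]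
          omega
        rw [hins, Finset.sum_insert (by simp), add_comm]
      match a with
      | 0 =>
        rw [tail_zero]
        calc (μ {ω | 0 ≤ S (s+1) ω}).toReal ≤ (μ Set.univ).toReal :=
              ENNReal.toReal_mono (measure_ne_top μ _) (measure_mono (Set.subset_univ _))
          _ = 1 := by simp
      | (b+1) =>
        -- decomposition
        set A : Set Ω := {ω | b + 1 ≤ S s ω} with hA
        set B : Set Ω := {ω | S s ω = b} with hB
        set C : Set Ω := {ω | X ⟨s, hs⟩ ω = 1} with hC
        have hE : {ω | b + 1 ≤ S (s+1) ω} = A ∪ (B ∩ C) := by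
          ext ω
          simp only [Set.mem_setOf_eq, Set.mem_union, Set.mem_inter_iff, hA, hB, hC, hsucc ω]
          have := hber ⟨s, hs⟩ ω
          omega
        have hdisj : Disjoint A (B ∩ C) := by
          rw [Set.disjoint_left]
          rintro ω hωA ⟨hωB, _⟩
          rw [hA, Set.mem_setOf_eq] at hωA
          rw [hB, Set.mem_setOf_eq] at hωB
          omega
        have hBCmeas : MeasurableSet (B ∩ C) :=
          (hBmeas s b).inter (hmeas _ (measurableSet_singleton 1))
        have hmuE : μ {ω | b + 1 ≤ S (s+1) ω} = μ A + μ (B ∩ C) := by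
          rw [hE, measure_union hdisj hBCmeas]
        -- A' = A ∪ B
        have hdisj2 : Disjoint A B := by
          rw [Set.disjoint_left]
          intro ω hωA hωB
          rw [hA, Set.mem_setOf_eq] at hωA
          rw [hB, Set.mem_setOf_eq] at hωB
          omega
        have hA'eq : {ω | b ≤ S s ω} = A ∪ B := by
          ext ω
          simp only [Set.mem_setOf_eq, Set.mem_union, hA, hB]
          omega
        have hmuA' : μ {ω | b ≤ S s ω} = μ A + μ B := by
          rw [hA'eq, measure_union hdisj2 (hBmeas s b)]
        -- conditional bound
        have hstep : (μ (B ∩ C)).toReal ≤ p * (μ B).toReal :=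
          step_bound μ n X hmeas hber p hp0 hcond s hs b
        -- assemble
        have e1 : (μ {ω | b + 1 ≤ S (s+1) ω}).toReal = (μ A).toReal + (μ (B ∩ C)).toReal := by
          rw [hmuE, ENNReal.toReal_add (measure_ne_top μ _) (measure_ne_top μ _)]
        have e2 : (μ {ω | b ≤ S s ω}).toReal = (μ A).toReal + (μ B).toReal := by
          rw [hmuA', ENNReal.toReal_add (measure_ne_top μ _) (measure_ne_top μ _)]
        have ih1 := ihs (b+1)
        have ih2 := ihs b
        rw [e2] at ih2
        rw [tail_succ, e1]
        have hq : (0:ℝ) ≤ 1 - p := by linarith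
        nlinarith [ENNReal.toReal_nonneg (a := μ B), ENNReal.toReal_nonneg (a := μ A),
          mul_nonneg hq (sub_nonneg.mpr ih1)]
  have hfin : {ω | a ≤ ∑ i, X i ω} = {ω | a ≤ S n ω} := by
    ext ω
    rw [hSdef]
    simp only [Set.mem_setOf_eq]
    have : Finset.univ.filter (fun i : Fin n => (i:ℕ) < n) = Finset.univ :=
      Finset.filter_true_of_mem fun i _ => i.isLt
    rw [this]
  rw [hfin]
  exact key n le_rfl a
end

section
/- Let ℓ ≥ 3 be odd, n odd and divisible by ℓ, and let G be the blow-up of K_{ℓ-1,ℓ-1} by cliques K_n. Every copy of C_ℓ in G contains at least one edge inside one of the blow-up cliques, and the total number of such internal edges is 2(ℓ-1)·binom(n,2) < e(G)/ℓ; hence G has no C_ℓ-decomposition. -/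
open SimpleGraph

namespace Paper

variable {V W : Type*}

/-- The blow-up of `K_{ℓ-1,ℓ-1}` by cliques `K_n`: vertices `(side, clique index, inner)`;
two distinct vertices are adjacent iff they are on opposite sides (complete bipartite
part) or in the same clique on the same side. -/
def bipartiteBlowup (ℓ n : ℕ) : SimpleGraph (Fin 2 × Fin (ℓ - 1) × Fin n) where
  Adj x y := x ≠ y ∧ (x.1 ≠ y.1 ∨ x.2.1 = y.2.1)
  symm := ⟨by
    rintro x y ⟨h1, h2⟩
    refine ⟨h1.symm, ?_⟩
    rcases h2 with h | h
    · exact Or.inl fun hh => h hh.symm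
    · exact Or.inr h.symm⟩
  loopless := ⟨by rintro x ⟨h, -⟩; exact h rfl⟩

/-- An edge of the blow-up of `K_{ℓ-1,ℓ-1}` is internal if both endpoints lie on the
same side (equivalently, inside one of the blow-up cliques). -/
def SameSideEdge (ℓ n : ℕ) (e : Sym2 (Fin 2 × Fin (ℓ - 1) × Fin n)) : Prop :=
  ∃ x y : Fin 2 × Fin (ℓ - 1) × Fin n, e = s(x, y) ∧ x.1 = y.1

def sideGraph (ℓ n : ℕ) : SimpleGraph (Fin 2 × Fin (ℓ - 1) × Fin n) where
  Adj x y := x ≠ y ∧ x.1 = y.1 ∧ x.2.1 = y.2.1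
  symm := ⟨by rintro x y ⟨h1, h2, h3⟩; exact ⟨h1.symm, h2.symm, h3.symm⟩⟩
  loopless := ⟨fun x h => h.1 rfl⟩

instance (ℓ n : ℕ) : DecidableRel (bipartiteBlowup ℓ n).Adj :=
  fun x y => decidable_of_iff (x ≠ y ∧ (x.1 ≠ y.1 ∨ x.2.1 = y.2.1)) Iff.rfl

instance (ℓ n : ℕ) : DecidableRel (sideGraph ℓ n).Adj :=
  fun x y => decidable_of_iff (x ≠ y ∧ x.1 = y.1 ∧ x.2.1 = y.2.1) Iff.rfl

lemma two_mul_card_edgeFinset {V : Type*} [Fintype V] (G : SimpleGraph V)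
    [DecidableRel G.Adj] (d : ℕ) (h : ∀ v, G.degree v = d) :
    2 * G.edgeFinset.card = Fintype.card V * d := by
  rw [← sum_degrees_eq_twice_card_edges]
  simp [h, Finset.sum_const, Finset.card_univ, mul_comm]

lemma fin2_ne_iff : ∀ a b : Fin 2, a ≠ b ↔ a = b + 1 := by decide

lemma fin2_aux1 : ∀ a b : Fin 2, a ≠ b → b = a + 1 := by decide

lemma fin2_aux2 : ∀ a : Fin 2, a ≠ a + 1 := by decide


lemma sideGraph_neighborFinset (ℓ n : ℕ) (x : Fin 2 × Fin (ℓ - 1) × Fin n) :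
    (sideGraph ℓ n).neighborFinset x =
      (Finset.univ.erase x.2.2).image (fun j => (x.1, x.2.1, j)) := by
  obtain ⟨x1, x2, x3⟩ := x
  ext ⟨y1, y2, y3⟩
  simp only [mem_neighborFinset, Finset.mem_image, Finset.mem_erase, Finset.mem_univ, and_true]
  constructor
  · rintro ⟨hne, h1, h2⟩
    dsimp at h1 h2
    subst h1; subst h2
    exact ⟨y3, fun h => hne (by rw [h]), rfl⟩
  · rintro ⟨j, hj, h⟩
    rw [← h]
    exact ⟨fun hh => hj (congrArg (fun p => p.2.2) hh.symm), rfl, rfl⟩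

lemma sideGraph_degree (ℓ n : ℕ) (x : Fin 2 × Fin (ℓ - 1) × Fin n) :
    (sideGraph ℓ n).degree x = n - 1 := by
  rw [degree, sideGraph_neighborFinset,
    Finset.card_image_of_injective _ (fun a b h => congrArg (fun p => p.2.2) h),
    Finset.card_erase_of_mem (Finset.mem_univ _), Finset.card_univ, Fintype.card_fin]

lemma blowup_neighborFinset (ℓ n : ℕ) (x : Fin 2 × Fin (ℓ - 1) × Fin n) :
    (bipartiteBlowup ℓ n).neighborFinset x =
      (Finset.univ.image (fun p : Fin (ℓ-1) × Fin n => (x.1 + 1, p.1, p.2))) ∪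
      (Finset.univ.erase x.2.2).image (fun j => (x.1, x.2.1, j)) := by
  obtain ⟨x1, x2, x3⟩ := x
  ext ⟨y1, y2, y3⟩
  simp only [mem_neighborFinset, Finset.mem_union, Finset.mem_image, Finset.mem_erase,
    Finset.mem_univ, and_true, true_and]
  constructor
  · rintro ⟨hne, h | h⟩
    · dsimp at h
      have h1 : y1 = x1 + 1 := fin2_aux1 x1 y1 h
      subst h1
      exact Or.inl ⟨⟨y2, y3⟩, rfl⟩
    · dsimp at h
      by_cases h1 : y1 = x1
      · subst h1; subst h
        refine Or.inr ⟨y3, fun hh => hne (by rw [hh]), rfl⟩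
      · have h2 : y1 = x1 + 1 := fin2_aux1 x1 y1 (fun hh => h1 hh.symm)
        subst h2
        exact Or.inl ⟨⟨y2, y3⟩, rfl⟩
  · rintro (⟨⟨p1, p2⟩, h⟩ | ⟨j, hj, h⟩)
    · rw [← h]
      refine ⟨?_, Or.inl ?_⟩
      · intro hh
        exact fin2_aux2 x1 (congrArg (fun p => p.1) hh)
      · dsimp
        intro hh
        exact fin2_aux2 x1 hh
    · rw [← h]
      exact ⟨fun hh => hj (congrArg (fun p => p.2.2) hh.symm), Or.inr rfl⟩

lemma blowup_degree (ℓ n : ℕ) (x : Fin 2 × Fin (ℓ - 1) × Fin n) :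
    (bipartiteBlowup ℓ n).degree x = (ℓ - 1) * n + (n - 1) := by
  rw [degree, blowup_neighborFinset, Finset.card_union_of_disjoint, Finset.card_image_of_injective,
    Finset.card_image_of_injective _ (fun a b h => congrArg (fun p => p.2.2) h),
    Finset.card_erase_of_mem (Finset.mem_univ _), Finset.card_univ, Finset.card_univ,
    Fintype.card_fin, Fintype.card_prod, Fintype.card_fin, Fintype.card_fin]
  · intro a b h
    have h1 := congrArg (fun p => p.2.1) h
    have h2 := congrArg (fun p => p.2.2) h
    exact Prod.ext h1 h2
  · rw [Finset.disjoint_left]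
    rintro y hy1 hy2
    simp only [Finset.mem_image, Finset.mem_erase, Finset.mem_univ, and_true, true_and] at hy1 hy2
    obtain ⟨p, hp⟩ := hy1
    obtain ⟨j, hj, hjy⟩ := hy2
    have : x.1 + 1 = x.1 := by
      rw [← hjy] at hp
      exact congrArg (fun q => q.1) hp
    exact fin2_aux2 x.1 this.symm

lemma ecard_eq_edgeFinset_card {V : Type*} [Fintype V] [DecidableEq V] (G : SimpleGraph V)
    [DecidableRel G.Adj] : ecard G = G.edgeFinset.card := by
  rw [ecard, Nat.card_coe_set_eq, Set.ncard_eq_toFinset_card']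
  congr 1

lemma card_vert (ℓ n : ℕ) : Fintype.card (Fin 2 × Fin (ℓ - 1) × Fin n) = 2 * ((ℓ-1) * n) := by
  simp [Fintype.card_prod, mul_assoc]

lemma ecard_blowup_s14 (ℓ n : ℕ) (hl : 1 ≤ ℓ) (hn : 1 ≤ n) :
    ecard (bipartiteBlowup ℓ n) = (ℓ-1) * n * (ℓ * n - 1) := by
  have h := two_mul_card_edgeFinset (bipartiteBlowup ℓ n) _ (blowup_degree ℓ n)
  rw [card_vert] at h
  rw [ecard_eq_edgeFinset_card]
  have e1 : (ℓ-1) * n = ℓ * n - n := by rw [Nat.sub_mul, one_mul]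
  have e5 : n ≤ ℓ * n := Nat.le_mul_of_pos_left n (by omega)
  have e2 : (ℓ-1) * n * (ℓ * n - 1) = ((ℓ-1)*n) * (ℓ*n-1) := rfl
  have e3 : 2 * ((ℓ-1)*n) * ((ℓ-1)*n + (n-1)) = 2 * (((ℓ-1)*n) * ((ℓ-1)*n + (n-1))) := by ring
  rw [e3] at h
  have e4 : ((ℓ-1)*n) * ((ℓ-1)*n + (n-1)) = ((ℓ-1)*n) * (ℓ*n - 1) := by
    congr 1
    omega
  rw [e4] at h
  omega

lemma ecard_sideGraph (ℓ n : ℕ) :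
    ecard (sideGraph ℓ n) = (ℓ-1) * n * (n - 1) := by
  have h := two_mul_card_edgeFinset (sideGraph ℓ n) _ (sideGraph_degree ℓ n)
  rw [card_vert] at h
  rw [ecard_eq_edgeFinset_card]
  have e3 : 2 * ((ℓ-1)*n) * (n-1) = 2 * ((ℓ-1) * n * (n-1)) := by ring
  omega

lemma sameSide_set_eq (ℓ n : ℕ) :
    {e | e ∈ (bipartiteBlowup ℓ n).edgeSet ∧ SameSideEdge ℓ n e} = (sideGraph ℓ n).edgeSet := by
  ext e
  induction e using Sym2.ind with
  | _ u v =>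
    simp only [Set.mem_setOf_eq, mem_edgeSet]
    constructor
    · rintro ⟨⟨hne, hor⟩, x, y, hexy, hxy⟩
      have huv : u.1 = v.1 := by
        rcases Sym2.eq_iff.mp hexy with ⟨rfl, rfl⟩ | ⟨rfl, rfl⟩
        · exact hxy
        · exact hxy.symm
      rcases hor with h | h
      · exact absurd huv h
      · exact ⟨hne, huv, h⟩
    · rintro ⟨hne, h1, h2⟩
      exact ⟨⟨hne, Or.inr h2⟩, u, v, rfl, h1⟩

lemma edgeSet_copyAt {V W : Type*} (F : SimpleGraph W) (φ : W ↪ V) :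
    (copyAt F φ).edgeSet = Sym2.map φ '' F.edgeSet := by
  ext e
  induction e using Sym2.ind with
  | _ u v =>
    simp only [mem_edgeSet, Set.mem_image]
    constructor
    · rintro ⟨a, b, hab, rfl, rfl⟩
      exact ⟨s(a,b), hab, rfl⟩
    · rintro ⟨e', he', hmap⟩
      induction e' using Sym2.ind with
      | _ a b =>
        rw [Sym2.map_pair_eq] at hmap
        rcases Sym2.eq_iff.mp hmap with ⟨h1, h2⟩ | ⟨h1, h2⟩
        · exact ⟨a, b, he', h1, h2⟩
        · exact ⟨b, a, F.symm.symm _ _ he', h2, h1⟩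

lemma ncard_edgeSet_cycle (ℓ : ℕ) (hℓ : 3 ≤ ℓ) : ((cycleGraph ℓ).edgeSet).ncard = ℓ := by
  obtain ⟨j, rfl⟩ : ∃ j, ℓ = j + 3 := ⟨ℓ - 3, by omega⟩
  have h := two_mul_card_edgeFinset (cycleGraph (j+3)) 2 (fun v => cycleGraph_degree_three_le)
  rw [Fintype.card_fin] at h
  rw [Set.ncard_eq_toFinset_card']
  have : (cycleGraph (j+3)).edgeSet.toFinset = (cycleGraph (j+3)).edgeFinset := rfl
  rw [this]
  omega

open Fin.NatCast Fin.CommRing in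
lemma cycle_adj' (ℓ : ℕ) [NeZero ℓ] (h : 3 ≤ ℓ) (k : ℕ) :
    (cycleGraph ℓ).Adj (((k:ℕ)+1 : ℕ) : Fin ℓ) ((k:ℕ) : Fin ℓ) := by
  rw [cycleGraph_adj']
  left
  have h1 : ((k+1 : ℕ) : Fin ℓ) - ((k : ℕ) : Fin ℓ) = 1 := by push_cast; ring
  rw [h1]
  obtain ⟨j, hj⟩ : ∃ j, ℓ = j + 3 := ⟨ℓ - 3, by omega⟩
  subst hj
  rfl

lemma fin2_self_ne_add_one : ∀ a : Fin 2, a ≠ a + 1 := by decide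

open Fin.NatCast Fin.CommRing in
lemma part1_s14 (ℓ n : ℕ) (hℓ : 3 ≤ ℓ) (hℓo : Odd ℓ)
    (φ : Fin ℓ ↪ Fin 2 × Fin (ℓ - 1) × Fin n) :
    ∃ e ∈ (copyAt (cycleGraph ℓ) φ).edgeSet, SameSideEdge ℓ n e := by
  by_contra hno
  push_neg at hno
  haveI : NeZero ℓ := ⟨by omega⟩
  have hne : ∀ a b : Fin ℓ, (cycleGraph ℓ).Adj a b → (φ a).1 ≠ (φ b).1 := by
    intro a b hab heq
    exact hno s(φ a, φ b) ⟨a, b, hab, rfl, rfl⟩ ⟨φ a, φ b, rfl, heq⟩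
  have key : ∀ k : ℕ, (φ ((k : ℕ) : Fin ℓ)).1 = (φ ((0:ℕ) : Fin ℓ)).1 + ((k : ℕ) : Fin 2) := by
    intro k
    induction k with
    | zero => simp
    | succ k ih =>
      have h1 := hne _ _ (cycle_adj' ℓ hℓ k)
      rw [fin2_ne_iff] at h1
      rw [h1, ih]
      push_cast
      ring
  have h2 := key ℓ
  rw [Fin.natCast_self] at h2
  obtain ⟨m, hm⟩ := hℓo
  have h3 : ((ℓ:ℕ) : Fin 2) = 1 := by
    subst hm
    push_cast
    have h4 : ((2:ℕ) : Fin 2) = 0 := rfl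
    simp [h4]
  rw [h3] at h2
  exact fin2_self_ne_add_one _ h2

lemma part3_arith (ℓ n : ℕ) (hℓ : 3 ≤ ℓ) (hn : Odd n) (hd : ℓ ∣ n) :
    (ℓ-1) * n * (n-1) < ((ℓ-1) * n * (ℓ * n - 1)) / ℓ := by
  obtain ⟨m, rfl⟩ := hd
  have hm : 1 ≤ m := by
    rcases Nat.eq_zero_or_pos m with h | h
    · subst h; simp at hn
    · exact h
  have e0 : (ℓ-1) * (ℓ * m) * (ℓ * (ℓ * m) - 1) = ℓ * ((ℓ-1) * m * (ℓ * (ℓ * m) - 1)) := by ring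
  rw [e0, Nat.mul_div_cancel_left _ (by omega : 0 < ℓ)]
  have key : ℓ * (ℓ * m - 1) < ℓ * (ℓ * m) - 1 := by
    have h1 : 1 ≤ ℓ * m := Nat.mul_pos (by omega) hm
    have h2 : ℓ * (ℓ * m - 1) = ℓ * (ℓ * m) - ℓ * 1 := Nat.mul_sub ..
    have h3 : ℓ * 1 ≤ ℓ * (ℓ * m) := Nat.mul_le_mul_left ℓ h1
    omega
  calc (ℓ-1) * (ℓ * m) * (ℓ * m - 1) = (ℓ-1) * m * (ℓ * (ℓ * m - 1)) := by ring
    _ < (ℓ-1) * m * (ℓ * (ℓ * m) - 1) :=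
        (Nat.mul_lt_mul_left (Nat.mul_pos (by omega) hm)).2 key

/-- For `ℓ ≥ 3` odd and `n` odd and divisible by `ℓ`: every copy of `C_ℓ` in the
blow-up `G` of `K_{ℓ-1,ℓ-1}` by cliques `K_n` contains an internal edge; the number of
internal edges is `2(ℓ-1)·binom(n,2)`, which is less than `e(G)/ℓ`; hence `G` has no
`C_ℓ`-decomposition. -/
theorem bipartiteBlowup_not_decomposable (ℓ n : ℕ) (hℓ : 3 ≤ ℓ) (hℓo : Odd ℓ)
    (hno : Odd n) (hℓn : ℓ ∣ n) :
    (∀ φ : Fin ℓ ↪ Fin 2 × Fin (ℓ - 1) × Fin n,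
      copyAt (cycleGraph ℓ) φ ≤ bipartiteBlowup ℓ n →
      ∃ e ∈ (copyAt (cycleGraph ℓ) φ).edgeSet, SameSideEdge ℓ n e) ∧
    Nat.card ↥{e | e ∈ (bipartiteBlowup ℓ n).edgeSet ∧ SameSideEdge ℓ n e} =
      2 * (ℓ - 1) * n.choose 2 ∧
    2 * (ℓ - 1) * n.choose 2 < ecard (bipartiteBlowup ℓ n) / ℓ ∧
    ¬ HasDecomposition (cycleGraph ℓ) (bipartiteBlowup ℓ n) := by
  have hn1 : 1 ≤ n := hno.pos
  have hchoose : 2 * (ℓ - 1) * n.choose 2 = (ℓ-1) * n * (n-1) := by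
    have hev : Even ((n-1) * ((n-1)+1)) := Nat.even_mul_succ_self _
    rw [show n-1+1 = n from by omega, mul_comm] at hev
    have h2 : 2 * n.choose 2 = n * (n-1) := by
      rw [Nat.choose_two_right]
      exact Nat.mul_div_cancel' hev.two_dvd
    calc 2 * (ℓ - 1) * n.choose 2 = (ℓ-1) * (2 * n.choose 2) := by ring
      _ = (ℓ-1) * (n * (n-1)) := by rw [h2]
      _ = (ℓ-1) * n * (n-1) := by ring
  have hcard : Nat.card ↥{e | e ∈ (bipartiteBlowup ℓ n).edgeSet ∧ SameSideEdge ℓ n e} =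
      2 * (ℓ - 1) * n.choose 2 := by
    rw [sameSide_set_eq]
    have h1 : Nat.card ↥(sideGraph ℓ n).edgeSet = ecard (sideGraph ℓ n) := rfl
    rw [h1, ecard_sideGraph, hchoose]
  have hlt : 2 * (ℓ - 1) * n.choose 2 < ecard (bipartiteBlowup ℓ n) / ℓ := by
    rw [ecard_blowup_s14 ℓ n (by omega) hn1, hchoose]
    exact part3_arith ℓ n hℓ hno hℓn
  refine ⟨fun φ _ => part1_s14 ℓ n hℓ hℓo φ, hcard, hlt, ?_⟩
  rintro ⟨s, hsub, hcover, hdisj⟩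
  have hsfin : s.Finite := Set.toFinite s
  set t := hsfin.toFinset with ht
  set D := {e | e ∈ (bipartiteBlowup ℓ n).edgeSet ∧ SameSideEdge ℓ n e} with hD
  have hDfin : D.Finite := Set.toFinite D
  have x0 : Fin 2 × Fin (ℓ-1) × Fin n := (0, ⟨0, by omega⟩, ⟨0, by omega⟩)
  have hpick : ∀ φ : Fin ℓ ↪ Fin 2 × Fin (ℓ-1) × Fin n, ∃ e, φ ∈ t →
      e ∈ (copyAt (cycleGraph ℓ) φ).edgeSet ∧ e ∈ D := by
    intro φ
    by_cases hφ : φ ∈ t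
    · rw [Set.Finite.mem_toFinset] at hφ
      obtain ⟨e, he1, he2⟩ := part1_s14 ℓ n hℓ hℓo φ
      exact ⟨e, fun _ => ⟨he1, SimpleGraph.edgeSet_mono (hsub φ hφ) he1, he2⟩⟩
    · exact ⟨s(x0, x0), fun h => absurd h hφ⟩
  choose f hf using hpick
  have hf1 : ∀ φ ∈ t, f φ ∈ (copyAt (cycleGraph ℓ) φ).edgeSet := fun φ hφ => (hf φ hφ).1
  have hf2 : ∀ φ ∈ t, f φ ∈ D := fun φ hφ => (hf φ hφ).2
  have htD : t.card ≤ hDfin.toFinset.card := by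
    apply Finset.card_le_card_of_injOn f
    · intro φ hφ
      rw [Finset.mem_coe, Set.Finite.mem_toFinset]
      exact hf2 φ hφ
    · intro φ hφ ψ hψ hfeq
      by_contra hne
      have hd := hdisj (hsfin.mem_toFinset.mp hφ) (hsfin.mem_toFinset.mp hψ) hne
      exact (Set.disjoint_left.mp hd (hf1 φ hφ)) (hfeq ▸ hf1 ψ hψ)
  have hEfin : ((bipartiteBlowup ℓ n).edgeSet).Finite := Set.toFinite _
  have hcopyfin : ∀ φ : Fin ℓ ↪ Fin 2 × Fin (ℓ-1) × Fin n,
      ((copyAt (cycleGraph ℓ) φ).edgeSet).Finite := fun _ => Set.toFinite _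
  have hsubE : hEfin.toFinset ⊆ t.biUnion (fun φ => (hcopyfin φ).toFinset) := by
    intro e he
    rw [Set.Finite.mem_toFinset] at he
    obtain ⟨φ, hφ, he2⟩ := hcover e he
    exact Finset.mem_biUnion.mpr ⟨φ, hsfin.mem_toFinset.mpr hφ, (hcopyfin φ).mem_toFinset.mpr he2⟩
  have hcle : ∀ φ ∈ t, ((hcopyfin φ).toFinset).card ≤ ℓ := by
    intro φ _
    rw [← Set.ncard_eq_toFinset_card _ (hcopyfin φ), edgeSet_copyAt]
    calc (Sym2.map φ '' (cycleGraph ℓ).edgeSet).ncard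
        ≤ ((cycleGraph ℓ).edgeSet).ncard := Set.ncard_image_le (Set.toFinite _)
      _ = ℓ := ncard_edgeSet_cycle ℓ hℓ
  have hE : ecard (bipartiteBlowup ℓ n) ≤ t.card * ℓ := by
    have h0 : ecard (bipartiteBlowup ℓ n) = hEfin.toFinset.card := by
      rw [ecard, Nat.card_coe_set_eq, Set.ncard_eq_toFinset_card _ hEfin]
    rw [h0]
    calc hEfin.toFinset.card ≤ (t.biUnion (fun φ => (hcopyfin φ).toFinset)).card :=
        Finset.card_le_card hsubE
      _ ≤ ∑ φ ∈ t, ((hcopyfin φ).toFinset).card := Finset.card_biUnion_le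
      _ ≤ t.card * ℓ := by
          have := Finset.sum_le_card_nsmul t _ ℓ hcle
          simpa [smul_eq_mul] using this
  have hDcard : hDfin.toFinset.card = 2 * (ℓ-1) * n.choose 2 := by
    rw [← Set.ncard_eq_toFinset_card _ hDfin, ← Nat.card_coe_set_eq]
    exact hcard
  have h1 : ecard (bipartiteBlowup ℓ n) ≤ (2 * (ℓ-1) * n.choose 2) * ℓ :=
    le_trans hE (Nat.mul_le_mul_right ℓ (htD.trans_eq hDcard))
  have h2 : (2 * (ℓ-1) * n.choose 2) * ℓ < (ecard (bipartiteBlowup ℓ n) / ℓ) * ℓ :=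
    Nat.mul_lt_mul_of_lt_of_le hlt (le_refl ℓ) (by omega)
  have h3 : (ecard (bipartiteBlowup ℓ n) / ℓ) * ℓ ≤ ecard (bipartiteBlowup ℓ n) :=
    Nat.div_mul_le_self _ _
  omega


end Paper
end

section
/- In the graph G of the previous statement, for every copy F of K_{r,r} in G the number of edges of F lying inside V_1 is divisible by r; but e(G[V_1]) = (r²m + r/2)(2r²m + r - 1) is not divisible by r, so G has no K_{r,r}-decomposition. -/
open SimpleGraph

namespace Paper

variable {V W : Type*}

/-- Which of the three parts a vertex of `Fin a ⊕ Fin b ⊕ Fin c` lies in. -/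
def tripIdx {a b c : ℕ} : Fin a ⊕ Fin b ⊕ Fin c → ℕ :=
  Sum.elim (fun _ => 0) (Sum.elim (fun _ => 1) (fun _ => 2))

/-- The graph with parts `V₁, V₂, V₃` of sizes `a, b, c`, consisting of a clique on
`V₁`, a clique on `V₃`, and a complete bipartite graph between `V₁ ∪ V₃` and `V₂`. -/
def tripartite (a b c : ℕ) : SimpleGraph (Fin a ⊕ Fin b ⊕ Fin c) where
  Adj x y := x ≠ y ∧
    ((tripIdx x = tripIdx y ∧ tripIdx x ≠ 1) ∨
     (tripIdx x = 1 ∧ tripIdx y ≠ 1) ∨ (tripIdx y = 1 ∧ tripIdx x ≠ 1))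
  symm := ⟨by
    rintro x y ⟨hne, hc⟩
    refine ⟨hne.symm, ?_⟩
    rcases hc with ⟨h1, h2⟩ | ⟨h1, h2⟩ | ⟨h1, h2⟩
    · exact Or.inl ⟨h1.symm, fun hh => h2 (h1.trans hh)⟩
    · exact Or.inr (Or.inr ⟨h1, h2⟩)
    · exact Or.inr (Or.inl ⟨h1, h2⟩)⟩
  loopless := ⟨by rintro x ⟨h, -⟩; exact h rfl⟩

/-- An edge lies inside `V₁` if both endpoints are in the first part. -/
def InsideV1 {a b c : ℕ} (e : Sym2 (Fin a ⊕ Fin b ⊕ Fin c)) : Prop :=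
  ∀ x ∈ e, ∃ i : Fin a, x = Sum.inl i

-- Lemma A : count of inside-V1 edges of a copy
lemma copy_inside_card (r a b c : ℕ)
    (φ : Fin r ⊕ Fin r ↪ Fin a ⊕ Fin b ⊕ Fin c) :
    Nat.card {e | e ∈ (copyAt (completeBipartiteGraph (Fin r) (Fin r)) φ).edgeSet ∧ InsideV1 e}
      = Nat.card {i : Fin r // ∃ v, φ (Sum.inl i) = Sum.inl v} *
        Nat.card {j : Fin r // ∃ v, φ (Sum.inr j) = Sum.inl v} := by
  rw [← Nat.card_prod]
  have hmem : ∀ i j : Fin r, (∃ v, φ (Sum.inl i) = Sum.inl v) →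
      (∃ v, φ (Sum.inr j) = Sum.inl v) →
      s(φ (Sum.inl i), φ (Sum.inr j)) ∈
        {e | e ∈ (copyAt (completeBipartiteGraph (Fin r) (Fin r)) φ).edgeSet ∧ InsideV1 e} := by
    intro i j hi hj
    refine ⟨⟨Sum.inl i, Sum.inr j, by simp [completeBipartiteGraph], rfl, rfl⟩, ?_⟩
    intro x hx
    rw [Sym2.mem_iff] at hx
    rcases hx with rfl | rfl
    · obtain ⟨v, hv⟩ := hi; exact ⟨v, hv⟩
    · obtain ⟨v, hv⟩ := hj; exact ⟨v, hv⟩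
  refine (Nat.card_eq_of_bijective
    (fun p => ⟨s(φ (Sum.inl p.1.1), φ (Sum.inr p.2.1)), hmem _ _ p.1.2 p.2.2⟩) ⟨?_, ?_⟩).symm
  · rintro ⟨⟨i, hi⟩, ⟨j, hj⟩⟩ ⟨⟨i', hi'⟩, ⟨j', hj'⟩⟩ h
    have h' := congrArg Subtype.val h
    simp only [Sym2.eq_iff] at h'
    rcases h' with ⟨h1, h2⟩ | ⟨h1, h2⟩
    · have : Sum.inl i = Sum.inl i' := φ.injective h1
      have h2' : Sum.inr j = Sum.inr j' := φ.injective h2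
      simp only [Sum.inl.injEq, Sum.inr.injEq] at this h2'
      subst this; subst h2'; rfl
    · exact absurd (φ.injective h1) (by simp)
  · rintro ⟨e, he, hins⟩
    induction e using Sym2.ind with
    | _ x y =>
      rw [SimpleGraph.mem_edgeSet] at he
      obtain ⟨u, w, huw, hx, hy⟩ := he
      have hxm : ∃ v, x = Sum.inl v := hins x (by simp)
      have hym : ∃ v, y = Sum.inl v := hins y (by simp)
      rcases u with i | i <;> rcases w with j | j
      · simp [completeBipartiteGraph] at huw
      · refine ⟨⟨⟨i, ?_⟩, ⟨j, ?_⟩⟩, ?_⟩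
        · obtain ⟨v, hv⟩ := hxm; exact ⟨v, hx.trans hv⟩
        · obtain ⟨v, hv⟩ := hym; exact ⟨v, hy.trans hv⟩
        · refine Subtype.ext ?_
          show s(φ (Sum.inl i), φ (Sum.inr j)) = s(x, y)
          rw [hx, hy]
      · refine ⟨⟨⟨j, ?_⟩, ⟨i, ?_⟩⟩, ?_⟩
        · obtain ⟨v, hv⟩ := hym; exact ⟨v, hy.trans hv⟩
        · obtain ⟨v, hv⟩ := hxm; exact ⟨v, hx.trans hv⟩
        · refine Subtype.ext ?_
          show s(φ (Sum.inl j), φ (Sum.inr i)) = s(x, y)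
          rw [hy, hx]
          exact Sym2.eq_swap
      · simp [completeBipartiteGraph] at huw


lemma copy_dvd (r a b c : ℕ)
    (φ : Fin r ⊕ Fin r ↪ Fin a ⊕ Fin b ⊕ Fin c)
    (hle : copyAt (completeBipartiteGraph (Fin r) (Fin r)) φ ≤ tripartite a b c) :
    r ∣ Nat.card {i : Fin r // ∃ v, φ (Sum.inl i) = Sum.inl v} *
        Nat.card {j : Fin r // ∃ v, φ (Sum.inr j) = Sum.inl v} := by
  classical
  have hadj : ∀ i j : Fin r, (tripartite a b c).Adj (φ (Sum.inl i)) (φ (Sum.inr j)) :=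
    fun i j => hle ⟨Sum.inl i, Sum.inr j, by simp [completeBipartiteGraph], rfl, rfl⟩
  by_cases h1 : ∀ j : Fin r, ∃ v, φ (Sum.inr j) = Sum.inl v
  · have : Nat.card {j : Fin r // ∃ v, φ (Sum.inr j) = Sum.inl v} = r := by
      rw [Nat.card_congr (Equiv.subtypeUnivEquiv h1)]
      simp
    rw [this]
    exact dvd_mul_left r _
  by_cases h2 : ∀ i : Fin r, ∃ v, φ (Sum.inl i) = Sum.inl v
  · have : Nat.card {i : Fin r // ∃ v, φ (Sum.inl i) = Sum.inl v} = r := by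
      rw [Nat.card_congr (Equiv.subtypeUnivEquiv h2)]
      simp
    rw [this]
    exact dvd_mul_right r _
  push_neg at h1 h2
  obtain ⟨j₁, hj₁⟩ := h1
  obtain ⟨i₁, hi₁⟩ := h2
  by_cases h3 : ∃ i : Fin r, ∃ v, φ (Sum.inl i) = Sum.inl v
  · by_cases h4 : ∃ j : Fin r, ∃ v, φ (Sum.inr j) = Sum.inl v
    · -- contradiction
      exfalso
      obtain ⟨i₀, vi, hvi⟩ := h3
      obtain ⟨j₀, vj, hvj⟩ := h4
      -- φ (inr j₁) is in V₂
      have hj1V2 : ∃ w, φ (Sum.inr j₁) = Sum.inr (Sum.inl w) := by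
        have h := hadj i₀ j₁
        rw [hvi] at h
        rcases hy : φ (Sum.inr j₁) with w | w | w
        · exact absurd hy (hj₁ w)
        · exact ⟨w, rfl⟩
        · rw [hy] at h
          obtain ⟨-, hc⟩ := h
          simp [tripIdx] at hc
      have hi1V2 : ∃ w, φ (Sum.inl i₁) = Sum.inr (Sum.inl w) := by
        have h := hadj i₁ j₀
        rw [hvj] at h
        rcases hy : φ (Sum.inl i₁) with w | w | w
        · exact absurd hy (hi₁ w)
        · exact ⟨w, rfl⟩
        · rw [hy] at h
          obtain ⟨-, hc⟩ := h
          simp [tripIdx] at hc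
      obtain ⟨w1, hw1⟩ := hj1V2
      obtain ⟨w2, hw2⟩ := hi1V2
      have h := hadj i₁ j₁
      rw [hw1, hw2] at h
      obtain ⟨-, hc⟩ := h
      simp [tripIdx] at hc
    · haveI : IsEmpty {j : Fin r // ∃ v, φ (Sum.inr j) = Sum.inl v} := by
        push_neg at h4
        exact ⟨fun ⟨j, v, hv⟩ => h4 j v hv⟩
      have h0 : Nat.card {j : Fin r // ∃ v, φ (Sum.inr j) = Sum.inl v} = 0 :=
        Nat.card_of_isEmpty
      rw [h0, mul_zero]
      exact dvd_zero r
  · haveI : IsEmpty {i : Fin r // ∃ v, φ (Sum.inl i) = Sum.inl v} := by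
      push_neg at h3
      exact ⟨fun ⟨i, v, hv⟩ => h3 i v hv⟩
    have h0 : Nat.card {i : Fin r // ∃ v, φ (Sum.inl i) = Sum.inl v} = 0 :=
      Nat.card_of_isEmpty
    rw [h0, zero_mul]
    exact dvd_zero r

lemma G_inside_card (a b c : ℕ) :
    Nat.card {e | e ∈ (tripartite a b c).edgeSet ∧ InsideV1 e} = a.choose 2 := by
  classical
  have hmem : ∀ p : {p : Sym2 (Fin a) // ¬ p.IsDiag},
      Sym2.map Sum.inl p.1 ∈ {e | e ∈ (tripartite a b c).edgeSet ∧ InsideV1 e} := by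
    rintro ⟨p, hp⟩
    induction p using Sym2.ind with
    | _ i j =>
      rw [Sym2.mk_isDiag_iff] at hp
      refine ⟨?_, ?_⟩
      · rw [Sym2.map_pair_eq, SimpleGraph.mem_edgeSet]
        exact ⟨by simp [hp], Or.inl ⟨rfl, by simp [tripIdx]⟩⟩
      · intro x hx
        rw [Sym2.map_pair_eq, Sym2.mem_iff] at hx
        rcases hx with rfl | rfl
        · exact ⟨i, rfl⟩
        · exact ⟨j, rfl⟩
  have hbij : Function.Bijective (fun p : {p : Sym2 (Fin a) // ¬ p.IsDiag} =>
      (⟨Sym2.map Sum.inl p.1, hmem p⟩ :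
        {e | e ∈ (tripartite a b c).edgeSet ∧ InsideV1 e})) := ⟨?_, ?_⟩
  rotate_left
  · rintro ⟨p, hp⟩ ⟨q, hq⟩ h
    have h' := congrArg Subtype.val h
    simp only at h'
    exact Subtype.ext (Sym2.map.injective Sum.inl_injective h')
  · rintro ⟨e, he, hins⟩
    induction e using Sym2.ind with
    | _ x y =>
      obtain ⟨i, hi⟩ := hins x (by simp)
      obtain ⟨j, hj⟩ := hins y (by simp)
      subst hi; subst hj
      rw [SimpleGraph.mem_edgeSet] at he
      refine ⟨⟨s(i, j), ?_⟩, ?_⟩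
      · rw [Sym2.mk_isDiag_iff]
        intro hij
        exact he.1 (by rw [hij])
      · refine Subtype.ext ?_
        show Sym2.map Sum.inl s(i, j) = s(Sum.inl i, Sum.inl j)
        rw [Sym2.map_pair_eq]
  rw [← Nat.card_eq_of_bijective _ hbij, Nat.card_eq_fintype_card,
    Sym2.card_subtype_not_diag, Fintype.card_fin]

lemma arith_eq (r m : ℕ) (hr : 2 ≤ r) (hre : Even r) :
    (2 * r ^ 2 * m + r).choose 2 = (r ^ 2 * m + r / 2) * (2 * r ^ 2 * m + r - 1) := by
  obtain ⟨k, rfl⟩ := hre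
  have hk2 : (k + k) / 2 = k := by omega
  rw [Nat.choose_two_right, hk2,
    show 2 * (k + k) ^ 2 * m + (k + k) = 2 * ((k + k) ^ 2 * m + k) by ring,
    Nat.mul_assoc, Nat.mul_div_cancel_left _ (by norm_num : 0 < 2)]

lemma arith_ndvd (r m : ℕ) (hr : 2 ≤ r) (hre : Even r) :
    ¬ r ∣ (r ^ 2 * m + r / 2) * (2 * r ^ 2 * m + r - 1) := by
  obtain ⟨k, rfl⟩ := hre
  have hk : 1 ≤ k := by omega
  have hk2 : (k + k) / 2 = k := by omega
  rw [hk2]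
  intro hdvd
  have h1 : 1 ≤ 2 * (k + k) ^ 2 * m + (k + k) :=
    le_trans (by omega : (1:ℕ) ≤ k + k) (Nat.le_add_left _ _)
  have heq : ((k + k) ^ 2 * m + k) * (2 * (k + k) ^ 2 * m + (k + k) - 1) + k =
      (k + k) * ((k + k) * m * (2 * (k + k) ^ 2 * m + (k + k) - 1) + (k + k) ^ 2 * m + k) := by
    zify [h1]
    ring
  have hdk : (k + k) ∣ k := by
    have h2 : (k + k) ∣ ((k + k) ^ 2 * m + k) * (2 * (k + k) ^ 2 * m + (k + k) - 1) + k :=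
      heq ▸ Dvd.intro _ rfl
    exact (Nat.dvd_add_right hdvd).mp h2
  have := Nat.le_of_dvd (by omega) hdk
  omega

/-- In the graph `G` of the previous statement (with `r ≥ 2` even, `m ≥ 1`), every copy
of `K_{r,r}` has a number of edges inside `V₁` divisible by `r`; but
`e(G[V₁]) = (r²m + r/2)(2r²m + r - 1)` is not divisible by `r`, so `G` has no
`K_{r,r}`-decomposition. -/
theorem tripartite_Krr_not_decomposable (r m : ℕ) (hr : 2 ≤ r) (hre : Even r)
    (hm : 1 ≤ m) :
    (∀ φ : Fin r ⊕ Fin r ↪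
        Fin (2 * r ^ 2 * m + r) ⊕ Fin (2 * r ^ 2 * m + 1) ⊕ Fin (2 * r ^ 2 * m - r),
      copyAt (completeBipartiteGraph (Fin r) (Fin r)) φ ≤
        tripartite (2 * r ^ 2 * m + r) (2 * r ^ 2 * m + 1) (2 * r ^ 2 * m - r) →
      r ∣ Nat.card
        ↥{e | e ∈ (copyAt (completeBipartiteGraph (Fin r) (Fin r)) φ).edgeSet ∧ InsideV1 e}) ∧
    Nat.card ↥{e | e ∈ (tripartite (2 * r ^ 2 * m + r) (2 * r ^ 2 * m + 1)
        (2 * r ^ 2 * m - r)).edgeSet ∧ InsideV1 e} =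
      (r ^ 2 * m + r / 2) * (2 * r ^ 2 * m + r - 1) ∧
    ¬ r ∣ (r ^ 2 * m + r / 2) * (2 * r ^ 2 * m + r - 1) ∧
    ¬ HasDecomposition (completeBipartiteGraph (Fin r) (Fin r))
        (tripartite (2 * r ^ 2 * m + r) (2 * r ^ 2 * m + 1) (2 * r ^ 2 * m - r)) := by
  classical
  have hV1 : ∀ φ : Fin r ⊕ Fin r ↪
        Fin (2 * r ^ 2 * m + r) ⊕ Fin (2 * r ^ 2 * m + 1) ⊕ Fin (2 * r ^ 2 * m - r),
      copyAt (completeBipartiteGraph (Fin r) (Fin r)) φ ≤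
        tripartite (2 * r ^ 2 * m + r) (2 * r ^ 2 * m + 1) (2 * r ^ 2 * m - r) →
      r ∣ Nat.card
        ↥{e | e ∈ (copyAt (completeBipartiteGraph (Fin r) (Fin r)) φ).edgeSet ∧ InsideV1 e} := by
    intro φ hφ
    rw [copy_inside_card]
    exact copy_dvd _ _ _ _ φ hφ
  have hV2 : Nat.card ↥{e | e ∈ (tripartite (2 * r ^ 2 * m + r) (2 * r ^ 2 * m + 1)
        (2 * r ^ 2 * m - r)).edgeSet ∧ InsideV1 e} =
      (r ^ 2 * m + r / 2) * (2 * r ^ 2 * m + r - 1) := by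
    rw [G_inside_card, arith_eq r m hr hre]
  refine ⟨hV1, hV2, arith_ndvd r m hr hre, ?_⟩
  rintro ⟨s, hmemb, hcover, hdisj⟩
  set G := tripartite (2 * r ^ 2 * m + r) (2 * r ^ 2 * m + 1) (2 * r ^ 2 * m - r) with hG
  set F := completeBipartiteGraph (Fin r) (Fin r) with hF
  have hsfin : s.Finite := Set.toFinite s
  set T := hsfin.toFinset with hT
  set Efin : (Fin r ⊕ Fin r ↪
      Fin (2 * r ^ 2 * m + r) ⊕ Fin (2 * r ^ 2 * m + 1) ⊕ Fin (2 * r ^ 2 * m - r)) →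
      Finset (Sym2 (Fin (2 * r ^ 2 * m + r) ⊕ Fin (2 * r ^ 2 * m + 1) ⊕
        Fin (2 * r ^ 2 * m - r))) :=
    fun φ => (Set.toFinite {e | e ∈ (copyAt F φ).edgeSet ∧ InsideV1 e}).toFinset with hE
  have hdisj' : ∀ φ ∈ T, ∀ ψ ∈ T, φ ≠ ψ → Disjoint (Efin φ) (Efin ψ) := by
    intro φ hφ ψ hψ hne
    rw [Finset.disjoint_left]
    intro e heφ heψ
    rw [hE, Set.Finite.mem_toFinset] at heφ heψ
    exact Set.disjoint_left.mp
      (hdisj (hsfin.mem_toFinset.mp hφ) (hsfin.mem_toFinset.mp hψ) hne) heφ.1 heψ.1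
  have hunion : T.biUnion Efin = (Set.toFinite {e | e ∈ G.edgeSet ∧ InsideV1 e}).toFinset := by
    ext e
    simp only [Finset.mem_biUnion, Set.Finite.mem_toFinset]
    constructor
    · rintro ⟨φ, hφ, he⟩
      rw [hE, Set.Finite.mem_toFinset] at he
      exact ⟨SimpleGraph.edgeSet_mono (hmemb φ (hsfin.mem_toFinset.mp hφ)) he.1, he.2⟩
    · rintro ⟨he, hins⟩
      obtain ⟨φ, hφ, he'⟩ := hcover e he
      exact ⟨φ, hsfin.mem_toFinset.mpr hφ, by rw [hE, Set.Finite.mem_toFinset]; exact ⟨he', hins⟩⟩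
  have hdvd : r ∣ ((Set.toFinite {e | e ∈ G.edgeSet ∧ InsideV1 e}).toFinset).card := by
    rw [← hunion, Finset.card_biUnion hdisj']
    refine Finset.dvd_sum ?_
    intro φ hφ
    have hc : (Efin φ).card =
        Nat.card {e | e ∈ (copyAt F φ).edgeSet ∧ InsideV1 e} := by
      rw [Nat.card_coe_set_eq, Set.ncard_eq_toFinset_card _ (Set.toFinite _)]
    rw [hc]
    exact hV1 φ (hmemb φ (hsfin.mem_toFinset.mp hφ))
  have hfin : Nat.card ↥{e | e ∈ G.edgeSet ∧ InsideV1 e} =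
      ((Set.toFinite {e | e ∈ G.edgeSet ∧ InsideV1 e}).toFinset).card := by
    rw [Nat.card_coe_set_eq, Set.ncard_eq_toFinset_card _ (Set.toFinite _)]
  exact arith_ndvd r m hr hre (by rw [← hV2, hfin]; exact hdvd)


end Paper
end
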